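/- arXiv:1901.10179 — 5 statements merged into one kernel-verified Lean document; each statement's English description precedes it below -/
import Mathlib

section
/- Let v ≥ 6, let ℓ ≥ 3, and let a : Fin ℓ → Fin v and b : Fin ℓ → Fin v be such that the 2ℓ points a_0,...,a_{ℓ-1}, b_0,...,b_{ℓ-1} are pairwise distinct. Then the cycle trade T(C) = Σ_{t ∈ Fin ℓ} E(t, t+1) (indices of the cycle taken mod ℓ) is a simple T(2,3,v) trade of volume 2ℓ. -/
/-- A `T(2,3,v)` trade: `f B = 0` unless `|B| = 3`, and every pair is balanced. -/
def isTrade (v : ℕ) (f : Finset (Fin v) → ℤ) : Prop :=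
  (∀ B : Finset (Fin v), B.card ≠ 3 → f B = 0) ∧
  ∀ P : Finset (Fin v), P.card = 2 →
    ∑ B ∈ Finset.univ.filter (fun B : Finset (Fin v) => B.card = 3 ∧ P ⊆ B), f B = 0

/-- A trade is simple if every value lies in `{-1, 0, 1}`. -/
def isSimple (v : ℕ) (f : Finset (Fin v) → ℤ) : Prop :=
  ∀ B : Finset (Fin v), f B = -1 ∨ f B = 0 ∨ f B = 1

/-- The volume of a trade: the sum of its positive entries. -/
def volume (v : ℕ) (f : Finset (Fin v) → ℤ) : ℤ :=
  ∑ B : Finset (Fin v), max (f B) 0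

/-- A `(2,3,v)`-halving: a simple trade taking value `±1` on every 3-subset. -/
def isHalving (v : ℕ) (f : Finset (Fin v) → ℤ) : Prop :=
  isTrade v f ∧ isSimple v f ∧
    ∀ B : Finset (Fin v), B.card = 3 → f B = 1 ∨ f B = -1

/-- The minimal trade `(a₀ a₁ a₂ ; b₀ b₁ b₂)`: it sends each of the eight sets
`{c₀,c₁,c₂}` with `cᵢ ∈ {aᵢ, bᵢ}` to `(-1)^(#{i : cᵢ = bᵢ})` and all other sets to 0. -/
def minimalTrade (v : ℕ) (a b : Fin 3 → Fin v) : Finset (Fin v) → ℤ :=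
  fun B => ∑ s : Fin 3 → Bool,
    (-1 : ℤ) ^ (Finset.univ.filter (fun i => s i = true)).card *
      (if B = Finset.image (fun i => if s i then b i else a i) Finset.univ then 1 else 0)

/-- The directed-edge trade `E(i,j) = 1_{{aᵢ,bᵢ,aⱼ}} + 1_{{aᵢ,bᵢ,bⱼ}} - 1_{{aⱼ,bⱼ,aᵢ}} - 1_{{aⱼ,bⱼ,bᵢ}}`. -/
def edgeTrade (v : ℕ) {ι : Type*} (a b : ι → Fin v) (i j : ι) : Finset (Fin v) → ℤ :=
  fun B => (if B = {a i, b i, a j} then 1 else 0) + (if B = {a i, b i, b j} then 1 else 0)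
    - (if B = {a j, b j, a i} then 1 else 0) - (if B = {a j, b j, b i} then 1 else 0)


open Finset Function

variable {v : ℕ}

lemma pair_subset_iff {x y z p q : Fin v} (hxy : x ≠ y) (hxz : x ≠ z) (hyz : y ≠ z)
    (hpq : p ≠ q) :
    ({p, q} : Finset (Fin v)) ⊆ {x, y, z} ↔
      ({p, q} : Finset (Fin v)) = {x, y} ∨ ({p, q} : Finset (Fin v)) = {x, z} ∨
        ({p, q} : Finset (Fin v)) = {y, z} := by
  constructor
  · intro h
    have hp : p ∈ ({x, y, z} : Finset (Fin v)) := h (by simp)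
    have hq : q ∈ ({x, y, z} : Finset (Fin v)) := h (by simp)
    simp only [Finset.mem_insert, Finset.mem_singleton] at hp hq
    rcases hp with rfl | rfl | rfl <;> rcases hq with rfl | rfl | rfl <;>
      first
        | exact absurd rfl hpq
        | tauto
        | (rw [Finset.pair_comm]; tauto)
  · rintro (h | h | h) <;> rw [h] <;> intro w hw <;>
      simp only [Finset.mem_insert, Finset.mem_singleton] at hw ⊢ <;> tauto

lemma ind_subset {x y z : Fin v} (hxy : x ≠ y) (hxz : x ≠ z) (hyz : y ≠ z)
    {P : Finset (Fin v)} (hP : P.card = 2) :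
    (if P ⊆ {x, y, z} then (1 : ℤ) else 0) =
      (if P = {x, y} then 1 else 0) + (if P = {x, z} then 1 else 0) +
        (if P = {y, z} then 1 else 0) := by
  obtain ⟨p, q, hpq, rfl⟩ := Finset.card_eq_two.mp hP
  have e1 : ({x, y} : Finset (Fin v)) ≠ {x, z} := fun h => by
    have : z ∈ ({x, y} : Finset (Fin v)) := h ▸ (by simp)
    simp only [Finset.mem_insert, Finset.mem_singleton] at this; tauto
  have e2 : ({x, y} : Finset (Fin v)) ≠ {y, z} := fun h => by
    have : z ∈ ({x, y} : Finset (Fin v)) := h ▸ (by simp)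
    simp only [Finset.mem_insert, Finset.mem_singleton] at this; tauto
  have e3 : ({x, z} : Finset (Fin v)) ≠ {y, z} := fun h => by
    have : y ∈ ({x, z} : Finset (Fin v)) := h ▸ (by simp)
    simp only [Finset.mem_insert, Finset.mem_singleton] at this; tauto
  rw [if_congr (pair_subset_iff hxy hxz hyz hpq) rfl rfl]
  by_cases h1 : ({p, q} : Finset (Fin v)) = {x, y}
  · simp [h1, e1, e2]
  by_cases h2 : ({p, q} : Finset (Fin v)) = {x, z}
  · simp [h2, h1, e3, e1.symm]
  by_cases h3 : ({p, q} : Finset (Fin v)) = {y, z}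
  · simp [h3, h1, h2, e2.symm, e3.symm]
  · simp [h1, h2, h3]

lemma edge_pair_sum {x1 x2 y1 y2 : Fin v} (h12 : x1 ≠ x2) (h1y1 : x1 ≠ y1)
    (h1y2 : x1 ≠ y2) (h2y1 : x2 ≠ y1) (h2y2 : x2 ≠ y2) (hy : y1 ≠ y2)
    {P : Finset (Fin v)} (hP : P.card = 2) :
    ((if P ⊆ ({x1, x2, y1} : Finset (Fin v)) then (1 : ℤ) else 0) +
      (if P ⊆ {x1, x2, y2} then 1 else 0)) -
      (if P ⊆ {y1, y2, x1} then 1 else 0) - (if P ⊆ {y1, y2, x2} then 1 else 0) =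
      2 * (if P = {x1, x2} then 1 else 0) - 2 * (if P = {y1, y2} then 1 else 0) := by
  rw [ind_subset h12 h1y1 h2y1 hP, ind_subset h12 h1y2 h2y2 hP,
    ind_subset hy h1y1.symm h1y2.symm hP, ind_subset hy h2y1.symm h2y2.symm hP,
    Finset.pair_comm y1 x1, Finset.pair_comm y2 x1, Finset.pair_comm y1 x2,
    Finset.pair_comm y2 x2]
  ring

variable {ℓ : ℕ}

lemma triple_eq {a b : Fin ℓ → Fin v} (ha : Injective a) (hb : Injective b)
    (hnab : ∀ i j, a i ≠ b j) {s t : Fin ℓ} {x y : Fin v}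
    (hx1 : x ≠ a s) (hx2 : x ≠ b s) (hy1 : y ≠ a t) (hy2 : y ≠ b t)
    (h : ({a s, b s, x} : Finset (Fin v)) = {a t, b t, y}) : s = t ∧ x = y := by
  have hat : a t ∈ ({a s, b s, x} : Finset (Fin v)) := h ▸ (by simp)
  have hbt : b t ∈ ({a s, b s, x} : Finset (Fin v)) := h ▸ (by simp)
  simp only [Finset.mem_insert, Finset.mem_singleton] at hat hbt
  have hst : s = t := by
    rcases hat with h1 | h1 | h1
    · exact ha h1.symm
    · exact absurd h1 (hnab t s)
    · -- a t = x
      rcases hbt with h2 | h2 | h2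
      · exact absurd h2.symm (hnab s t)
      · have hts : t = s := hb h2
        exact absurd (hts ▸ h1).symm hx1
      · exact absurd (h1.trans h2.symm) (hnab t t)
  subst hst
  refine ⟨rfl, ?_⟩
  have hx : x ∈ ({a s, b s, y} : Finset (Fin v)) := h ▸ (by simp)
  simp only [Finset.mem_insert, Finset.mem_singleton] at hx
  rcases hx with h1 | h1 | h1
  · exact absurd h1 hx1
  · exact absurd h1 hx2
  · exact h1

def pidx (o : Fin ℓ) (x : Fin ℓ × Fin 4) : Fin ℓ := if x.2.val < 2 then x.1 else x.1 + o

def thrd (a b : Fin ℓ → Fin v) (o : Fin ℓ) (x : Fin ℓ × Fin 4) : Fin v :=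
  if x.2.val = 0 then a (x.1 + o) else if x.2.val = 1 then b (x.1 + o)
    else if x.2.val = 2 then a x.1 else b x.1

def cset (a b : Fin ℓ → Fin v) (o : Fin ℓ) (x : Fin ℓ × Fin 4) : Finset (Fin v) :=
  {a (pidx o x), b (pidx o x), thrd a b o x}

def sgn (k : Fin 4) : ℤ := if k.val < 2 then 1 else -1

section core
variable [NeZero ℓ] {a b : Fin ℓ → Fin v} {o : Fin ℓ}
variable (ha : Injective a) (hb : Injective b) (hnab : ∀ i j, a i ≠ b j)
variable (ho : ∀ t : Fin ℓ, t + o ≠ t) (ho2 : ∀ t : Fin ℓ, t + o + o ≠ t)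

omit [NeZero ℓ] in
include ha hb hnab ho in
lemma thrd_ne (x : Fin ℓ × Fin 4) :
    thrd a b o x ≠ a (pidx o x) ∧ thrd a b o x ≠ b (pidx o x) := by
  obtain ⟨t, k⟩ := x
  fin_cases k <;> simp only [thrd, pidx] <;> norm_num <;>
    refine ⟨?_, ?_⟩ <;>
    first
      | exact fun h => ho t (ha h)
      | exact fun h => ho t (hb h)
      | exact fun h => ho t (ha h.symm)
      | exact fun h => ho t (hb h.symm)
      | exact hnab _ _
      | exact (hnab _ _).symm

include ha hb hnab ho ho2 in
lemma cset_inj : Injective (cset a b o) := by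
  intro x x' h
  have key := triple_eq ha hb hnab (thrd_ne ha hb hnab ho x).1 (thrd_ne ha hb hnab ho x).2
    (thrd_ne ha hb hnab ho x').1 (thrd_ne ha hb hnab ho x').2 h
  obtain ⟨hp, ht⟩ := key
  obtain ⟨t, k⟩ := x; obtain ⟨t', k'⟩ := x'
  fin_cases k <;> fin_cases k' <;>
    simp only [thrd, pidx, Prod.mk.injEq] <;> norm_num <;>
    simp only [thrd, pidx] at hp ht <;> norm_num at hp ht <;>
    first
      | exact hp
      | exact absurd ht (hnab _ _)
      | exact absurd ht.symm (hnab _ _)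
      | (have h2 := ha ht; rw [← h2] at hp; exact absurd hp.symm (ho2 t))
      | (have h2 := hb ht; rw [← h2] at hp; exact absurd hp.symm (ho2 t))
      | (have h2 := ha ht; rw [← hp] at h2; exact absurd h2 (ho2 t))
      | (have h2 := hb ht; rw [← hp] at h2; exact absurd h2 (ho2 t))
      | (have h2 := ha ht; rw [← hp] at h2; exact absurd h2.symm (ho2 t))
      | (have h2 := hb ht; rw [← hp] at h2; exact absurd h2.symm (ho2 t))
      | exact add_right_cancel hp

include ha hb hnab ho in
lemma cset_card (x : Fin ℓ × Fin 4) : (cset a b o x).card = 3 := by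
  have h1 := (thrd_ne ha hb hnab ho x).1
  have h2 := (thrd_ne ha hb hnab ho x).2
  exact Finset.card_eq_three.mpr
    ⟨a (pidx o x), b (pidx o x), thrd a b o x, hnab _ _, h1.symm, h2.symm, rfl⟩

include ha hb hnab ho in
lemma per_t {P : Finset (Fin v)} (hP : P.card = 2) (t : Fin ℓ) :
    ∑ k : Fin 4, (if P ⊆ cset a b o (t, k) then sgn k else 0) =
      2 * (if P = {a t, b t} then 1 else 0) -
        2 * (if P = {a (t + o), b (t + o)} then 1 else 0) := by
  have d1 : a t ≠ b t := hnab t t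
  have d2 : a t ≠ a (t + o) := fun h => ho t (ha h.symm)
  have d3 : a t ≠ b (t + o) := hnab _ _
  have d4 : b t ≠ a (t + o) := (hnab _ _).symm
  have d5 : b t ≠ b (t + o) := fun h => ho t (hb h.symm)
  have d6 : a (t + o) ≠ b (t + o) := hnab _ _
  have e0 : ((0 : Fin 4) : ℕ) = 0 := rfl
  have e1 : ((1 : Fin 4) : ℕ) = 1 := rfl
  have e2 : ((2 : Fin 4) : ℕ) = 2 := rfl
  have e3 : ((3 : Fin 4) : ℕ) = 3 := rfl
  have neg1 : ∀ (c : Prop) (inst : Decidable c), (if c then (-1 : ℤ) else 0) = -(if c then 1 else 0) := by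
    intro c inst; split_ifs <;> ring
  have two1 : ∀ (c : Prop) (inst : Decidable c), (if c then (2 : ℤ) else 0) = 2 * (if c then 1 else 0) := by
    intro c inst; split_ifs <;> ring
  rw [Fin.sum_univ_four]
  simp only [cset, pidx, thrd, sgn, e0, e1, e2, e3]
  norm_num
  simp only [neg1, two1]
  linear_combination edge_pair_sum d1 d2 d3 d4 d5 d6 hP


end core

lemma sum_edge_eq (a b : Fin ℓ → Fin v) (o : Fin ℓ) (B : Finset (Fin v)) :
    ∑ t : Fin ℓ, edgeTrade v a b t (t + o) B =
      ∑ x : Fin ℓ × Fin 4, sgn x.2 * (if B = cset a b o x then 1 else 0) := by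
  rw [Fintype.sum_prod_type]
  refine Finset.sum_congr rfl fun t _ => ?_
  rw [Fin.sum_univ_four]
  have e0 : ((0 : Fin 4) : ℕ) = 0 := rfl
  have e1 : ((1 : Fin 4) : ℕ) = 1 := rfl
  have e2 : ((2 : Fin 4) : ℕ) = 2 := rfl
  have e3 : ((3 : Fin 4) : ℕ) = 3 := rfl
  simp only [edgeTrade, sgn, cset, pidx, thrd, e0, e1, e2, e3]
  norm_num
  split_ifs <;> norm_num

/-- For `v ≥ 6`, `ℓ ≥ 3`, and `2ℓ` pairwise distinct points `aₜ, bₜ` of `Fin v`,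
the cycle trade `T(C) = Σ_{t ∈ Fin ℓ} E(t, t+1)` (indices mod `ℓ`) is a simple `T(2,3,v)`
trade of volume `2ℓ`. -/
theorem cycleTrade_is_simple_trade
    (v ℓ : ℕ) (hv : 6 ≤ v) (hℓ : 3 ≤ ℓ) (a b : Fin ℓ → Fin v)
    (hab : Function.Injective (Sum.elim a b)) :
    isTrade v (fun B => ∑ t : Fin ℓ, edgeTrade v a b t (t + ⟨1, by omega⟩) B) ∧
    isSimple v (fun B => ∑ t : Fin ℓ, edgeTrade v a b t (t + ⟨1, by omega⟩) B) ∧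
    volume v (fun B => ∑ t : Fin ℓ, edgeTrade v a b t (t + ⟨1, by omega⟩) B) = 2 * ℓ := by
  haveI : NeZero ℓ := ⟨by omega⟩
  have ha : Injective a := fun i j h => by
    have := hab (show Sum.elim a b (.inl i) = Sum.elim a b (.inl j) from h)
    simpa using this
  have hb : Injective b := fun i j h => by
    have := hab (show Sum.elim a b (.inr i) = Sum.elim a b (.inr j) from h)
    simpa using this
  have hnab : ∀ i j, a i ≠ b j := fun i j h => by
    have := hab (show Sum.elim a b (.inl i) = Sum.elim a b (.inr j) from h)
    simp at this
  have h1ℓ : 1 < ℓ := by omega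
  set o : Fin ℓ := ⟨1, h1ℓ⟩ with o_def
  have ho : ∀ t : Fin ℓ, t + o ≠ t := by
    intro t h
    have h0 : o = 0 := by rwa [add_eq_left] at h
    have := congrArg Fin.val h0
    simp [o_def, Fin.ext_iff] at this
  have ho2 : ∀ t : Fin ℓ, t + o + o ≠ t := by
    intro t h
    rw [add_assoc] at h
    have h0 : o + o = 0 := by rwa [add_eq_left] at h
    have := congrArg Fin.val h0
    rw [Fin.add_def] at this
    have hv1 : (o : ℕ) = 1 := rfl
    rw [hv1] at this
    simp only [Fin.val_zero] at this
    rw [Nat.mod_eq_of_lt (by omega)] at this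
    omega
  have hinj := cset_inj ha hb hnab ho ho2
  have hcard := cset_card ha hb hnab ho (o := o)
  have hf : ∀ B, (∑ t : Fin ℓ, edgeTrade v a b t (t + o) B) =
      ∑ x : Fin ℓ × Fin 4, sgn x.2 * (if B = cset a b o x then 1 else 0) :=
    sum_edge_eq a b o
  refine ⟨⟨?_, ?_⟩, ?_, ?_⟩
  · -- vanishing off 3-sets
    intro B hB
    show (∑ t : Fin ℓ, edgeTrade v a b t (t + o) B) = 0
    rw [hf]
    refine Finset.sum_eq_zero fun x _ => ?_
    rw [if_neg, mul_zero]
    exact fun hBx => hB (hBx ▸ hcard x)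
  · -- pair balance
    intro P hP
    simp only [hf]
    rw [Finset.sum_comm]
    have step1 : ∀ x : Fin ℓ × Fin 4,
        (∑ B ∈ Finset.univ.filter (fun B : Finset (Fin v) => B.card = 3 ∧ P ⊆ B),
          sgn x.2 * (if B = cset a b o x then 1 else 0)) =
        (if P ⊆ cset a b o x then sgn x.2 else 0) := by
      intro x
      simp only [mul_ite, mul_one, mul_zero]
      rw [Finset.sum_ite_eq' (Finset.univ.filter (fun B : Finset (Fin v) => B.card = 3 ∧ P ⊆ B))
        (cset a b o x) (fun _ => sgn x.2)]
      simp [hcard x]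
    rw [Finset.sum_congr rfl fun x _ => step1 x, Fintype.sum_prod_type]
    rw [Finset.sum_congr rfl fun t _ => per_t ha hb hnab ho hP t]
    rw [Finset.sum_sub_distrib]
    have : (∑ t : Fin ℓ, 2 * (if P = {a (t + o), b (t + o)} then (1:ℤ) else 0)) =
        ∑ t : Fin ℓ, 2 * (if P = {a t, b t} then (1:ℤ) else 0) :=
      Fintype.sum_equiv (Equiv.addRight o) _ _ (fun t => by simp [Equiv.addRight])
    rw [this, sub_self]
  · -- simple
    intro B
    simp only [hf]
    by_cases hex : ∃ x, B = cset a b o x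
    · obtain ⟨x0, hx0⟩ := hex
      rw [Finset.sum_eq_single x0]
      · rw [if_pos hx0, mul_one]
        unfold sgn
        split_ifs
        · right; right; rfl
        · left; rfl
      · intro x _ hxne
        rw [if_neg, mul_zero]
        exact fun hBx => hxne (hinj (hBx.symm.trans hx0))
      · simp
    · push_neg at hex
      refine Or.inr (Or.inl (Finset.sum_eq_zero fun x _ => ?_))
      rw [if_neg (hex x), mul_zero]
  · -- volume
    show (∑ B : Finset (Fin v), max (∑ t : Fin ℓ, edgeTrade v a b t (t + o) B) 0) = 2 * ℓ
    have hmax : ∀ B : Finset (Fin v), max (∑ t : Fin ℓ, edgeTrade v a b t (t + o) B) 0 =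
        ∑ x : Fin ℓ × Fin 4, (if B = cset a b o x ∧ x.2.val < 2 then (1:ℤ) else 0) := by
      intro B
      rw [hf]
      by_cases hex : ∃ x, B = cset a b o x
      · obtain ⟨x0, hx0⟩ := hex
        rw [Finset.sum_eq_single x0 (fun x _ hxne => by
            rw [if_neg, mul_zero]
            exact fun hBx => hxne (hinj (hBx.symm.trans hx0))) (by simp),
          Finset.sum_eq_single x0 (fun x _ hxne => by
            rw [if_neg]
            exact fun hc => hxne (hinj (hc.1.symm.trans hx0))) (by simp)]
        rw [if_pos hx0, mul_one]
        unfold sgn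
        by_cases h2 : x0.2.val < 2
        · simp [h2, hx0]
        · simp [h2, hx0]
      · push_neg at hex
        rw [Finset.sum_eq_zero fun x _ => by rw [if_neg (hex x), mul_zero],
          Finset.sum_eq_zero fun x _ => by
            rw [if_neg]; exact fun hc => hex x hc.1]
        simp
    simp only [hmax]
    rw [Finset.sum_comm]
    have step2 : ∀ x : Fin ℓ × Fin 4,
        (∑ B : Finset (Fin v), if B = cset a b o x ∧ x.2.val < 2 then (1:ℤ) else 0) =
        if x.2.val < 2 then 1 else 0 := by
      intro x
      by_cases hc : x.2.val < 2
      · simp only [hc, and_true]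
        rw [Finset.sum_ite_eq' Finset.univ (cset a b o x) (fun _ => (1:ℤ))]
        simp
      · simp [hc]
    rw [Finset.sum_congr rfl fun x _ => step2 x, Fintype.sum_prod_type]
    have e0 : ((0 : Fin 4) : ℕ) = 0 := rfl
    have e1 : ((1 : Fin 4) : ℕ) = 1 := rfl
    have e2 : ((2 : Fin 4) : ℕ) = 2 := rfl
    have e3 : ((3 : Fin 4) : ℕ) = 3 := rfl
    have : ∀ t : Fin ℓ, (∑ k : Fin 4, if (k : ℕ) < 2 then (1:ℤ) else 0) = 2 := by
      intro t
      rw [Fin.sum_univ_four]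
      simp [e0, e1, e2, e3]
    rw [Finset.sum_congr rfl fun t _ => this t]
    simp [Finset.card_univ]
    ring
end

section
/- Let v ≥ 6, let m ≥ 3, and let a : Fin m → Fin v, b : Fin m → Fin v be such that the 2m points a_i, b_i are pairwise distinct. Let ε : Fin m → Fin m → ℤ satisfy ε i i = 0, ε i j ∈ {1,-1} and ε j i = -ε i j for all i ≠ j, and Σ_j ε i j = 0 for every i (a balanced orientation of the complete graph K_m, as arises from an Eulerian circuit). Define g : Finset (Fin v) → ℤ by g({a_i, b_i, a_j}) = g({a_i, b_i, b_j}) = ε i j for all i ≠ j, and g B = 0 for every other set B. Then g is a simple T(2,3,v) trade of volume m(m-1), and its support is exactly the set of 3-element subsets of the form {a_i, b_i, a_j} or {a_i, b_i, b_j} with i ≠ j. -/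
section MyAux

private def trip {v m : ℕ} (a b : Fin m → Fin v) (q : (Fin m × Fin m) × Bool) : Finset (Fin v) :=
  {a q.1.1, b q.1.1, if q.2 then b q.1.2 else a q.1.2}

private lemma ite_or3 {A B C : Prop} [Decidable A] [Decidable B] [Decidable C] (e : ℤ)
    (hAB : ¬(A ∧ B)) (hAC : ¬(A ∧ C)) (hBC : ¬(B ∧ C)) :
    (if A ∨ B ∨ C then e else 0) =
      (if A then e else 0) + (if B then e else 0) + (if C then e else 0) := by
  by_cases hA : A <;> by_cases hB : B <;> by_cases hC : C <;> simp_all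

private lemma pair_ne_right {α : Type*} [DecidableEq α] {x y z w : α} (h1 : y ≠ z) (h2 : y ≠ w) :
    ({x, y} : Finset α) ≠ {z, w} := by
  intro h
  have : y ∈ ({z, w} : Finset α) := h ▸ by simp
  simp at this; tauto

private lemma pair_ne_left {α : Type*} [DecidableEq α] {x y z w : α} (h1 : x ≠ z) (h2 : x ≠ w) :
    ({x, y} : Finset α) ≠ {z, w} := by
  intro h
  have : x ∈ ({z, w} : Finset α) := h ▸ by simp
  simp at this; tauto

private lemma pair_subset_triple {α : Type*} [DecidableEq α] {x y z : α} {P : Finset α}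
    (hP : P.card = 2) (hxy : x ≠ y) (hxz : x ≠ z) (hyz : y ≠ z) :
    P ⊆ {x, y, z} ↔ P = {x, y} ∨ P = {x, z} ∨ P = {y, z} := by
  obtain ⟨p, q, hpq, rfl⟩ := Finset.card_eq_two.mp hP
  constructor
  · intro h
    have hp : p ∈ ({x, y, z} : Finset α) := h (by simp)
    have hq : q ∈ ({x, y, z} : Finset α) := h (by simp)
    simp only [Finset.mem_insert, Finset.mem_singleton] at hp hq
    rcases hp with rfl | rfl | rfl <;> rcases hq with rfl | rfl | rfl <;>
      simp_all [Finset.pair_comm]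
  · rintro (h | h | h) <;> rw [h] <;> intro t ht <;> simp at ht ⊢ <;> tauto

private lemma ite_neg0 {c : Prop} [Decidable c] (e : ℤ) :
    (if c then -e else 0) = -(if c then e else 0) := by
  split <;> simp

private lemma trip_inj {v m : ℕ} {a b : Fin m → Fin v}
    (haa : ∀ i j, a i = a j ↔ (i : ℕ) = (j : ℕ))
    (hbb : ∀ i j, b i = b j ↔ (i : ℕ) = (j : ℕ))
    (hab' : ∀ i j, a i = b j ↔ False)
    (hba' : ∀ i j, b i = a j ↔ False)
    (q r : (Fin m × Fin m) × Bool) (hq : q.1.1 ≠ q.1.2) (hr : r.1.1 ≠ r.1.2)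
    (h : trip a b q = trip a b r) : q = r := by
  obtain ⟨⟨i, j⟩, s⟩ := q
  obtain ⟨⟨k, l⟩, t⟩ := r
  have hij : (i : ℕ) ≠ j := fun hh => hq (Fin.ext hh)
  have hkl : (k : ℕ) ≠ l := fun hh => hr (Fin.ext hh)
  cases s <;> cases t <;>
  · simp only [trip, Bool.false_eq_true, Bool.true_eq_false, if_true, if_false, ite_true,
      ite_false] at h
    have H := Finset.ext_iff.mp h
    have H1 := H (a i); have H2 := H (b i); have H3 := H (a j); have H3' := H (b j)
    have H4 := H (a k); have H5 := H (b k); have H6 := H (a l); have H6' := H (b l)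
    simp only [Finset.mem_insert, Finset.mem_singleton, haa, hbb, hab', hba',
      or_false, false_or, true_or, or_true, iff_false, false_iff, iff_true,
      true_iff] at H1 H2 H3 H3' H4 H5 H6 H6'
    simp only [Prod.mk.injEq, Fin.ext_iff, Bool.false_eq_true, Bool.true_eq_false,
      eq_self_iff_true, and_true, true_and, and_false, false_and]
    omega

end MyAux

/-- For `v ≥ 6`, `m ≥ 3`, `2m` pairwise distinct points `aᵢ, bᵢ`, and a balanced
orientation `ε` of the complete graph `K_m`, the function `g` with
`g({aᵢ,bᵢ,aⱼ}) = g({aᵢ,bᵢ,bⱼ}) = ε i j` for `i ≠ j` and `g B = 0` otherwise is a simple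
`T(2,3,v)` trade of volume `m(m-1)`, with support exactly the sets of the form
`{aᵢ,bᵢ,aⱼ}` or `{aᵢ,bᵢ,bⱼ}` with `i ≠ j`. -/
theorem balanced_orientation_trade
    (v m : ℕ) (hv : 6 ≤ v) (hm : 3 ≤ m) (a b : Fin m → Fin v)
    (hab : Function.Injective (Sum.elim a b))
    (ε : Fin m → Fin m → ℤ)
    (hε0 : ∀ i, ε i i = 0)
    (hε1 : ∀ i j, i ≠ j → ε i j = 1 ∨ ε i j = -1)
    (hεanti : ∀ i j, ε j i = -ε i j)
    (hεbal : ∀ i, ∑ j : Fin m, ε i j = 0)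
    (g : Finset (Fin v) → ℤ)
    (hg1 : ∀ i j : Fin m, i ≠ j → g {a i, b i, a j} = ε i j ∧ g {a i, b i, b j} = ε i j)
    (hg2 : ∀ B : Finset (Fin v),
      (¬ ∃ i j : Fin m, i ≠ j ∧ (B = {a i, b i, a j} ∨ B = {a i, b i, b j})) → g B = 0) :
    isTrade v g ∧ isSimple v g ∧ volume v g = m * (m - 1) ∧
      {B : Finset (Fin v) | g B ≠ 0} =
        {B : Finset (Fin v) |
          ∃ i j : Fin m, i ≠ j ∧ (B = {a i, b i, a j} ∨ B = {a i, b i, b j})} := by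
  classical
  have haa : ∀ i j, a i = a j ↔ (i : ℕ) = (j : ℕ) := by
    intro i j
    constructor
    · intro h
      have := @hab (Sum.inl i) (Sum.inl j) h
      simpa [Fin.ext_iff] using this
    · intro h; exact congrArg a (Fin.ext h)
  have hbb : ∀ i j, b i = b j ↔ (i : ℕ) = (j : ℕ) := by
    intro i j
    constructor
    · intro h
      have := @hab (Sum.inr i) (Sum.inr j) h
      simpa [Fin.ext_iff] using this
    · intro h; exact congrArg b (Fin.ext h)
  have hab' : ∀ i j, a i = b j ↔ False := by
    intro i j
    simp only [iff_false]
    intro h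
    exact absurd (@hab (Sum.inl i) (Sum.inr j) h) (by simp)
  have hba' : ∀ i j, b i = a j ↔ False := by
    intro i j
    simp only [iff_false]
    intro h
    exact absurd (@hab (Sum.inr i) (Sum.inl j) h) (by simp)
  have hne_ab : ∀ i j : Fin m, a i ≠ b j := fun i j h => (hab' i j).mp h
  have hne_ba : ∀ i j : Fin m, b i ≠ a j := fun i j h => (hba' i j).mp h
  have hne_aa : ∀ i j : Fin m, i ≠ j → a i ≠ a j := fun i j h hh =>
    h (Fin.ext ((haa i j).mp hh))
  have hne_bb : ∀ i j : Fin m, i ≠ j → b i ≠ b j := fun i j h hh =>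
    h (Fin.ext ((hbb i j).mp hh))
  set D : Finset (Fin m × Fin m) := Finset.univ.offDiag with hD
  set Q : Finset ((Fin m × Fin m) × Bool) := D ×ˢ Finset.univ with hQ
  have hQmem : ∀ q ∈ Q, q.1.1 ≠ q.1.2 := by
    intro q hq
    rw [hQ, Finset.mem_product] at hq
    exact (Finset.mem_offDiag.mp hq.1).2.2
  have hQmem' : ∀ q : (Fin m × Fin m) × Bool, q.1.1 ≠ q.1.2 → q ∈ Q := by
    intro q h
    rw [hQ, Finset.mem_product]
    exact ⟨Finset.mem_offDiag.mpr ⟨Finset.mem_univ _, Finset.mem_univ _, h⟩, Finset.mem_univ _⟩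
  have hinj' : ∀ x ∈ Q, ∀ y ∈ Q, trip a b x = trip a b y → x = y := fun x hx y hy h =>
    trip_inj haa hbb hab' hba' x y (hQmem x hx) (hQmem y hy) h
  set S : Finset (Finset (Fin v)) := Q.image (trip a b) with hS
  have htripa : ∀ p : Fin m × Fin m, trip a b (p, false) = {a p.1, b p.1, a p.2} := by
    intro p; simp [trip]
  have htripb : ∀ p : Fin m × Fin m, trip a b (p, true) = {a p.1, b p.1, b p.2} := by
    intro p; simp [trip]
  have hcard : ∀ q : (Fin m × Fin m) × Bool, q.1.1 ≠ q.1.2 → (trip a b q).card = 3 := by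
    rintro ⟨⟨i, j⟩, s⟩ h
    replace h : i ≠ j := h
    cases s
    · rw [htripa]
      exact Finset.card_eq_three.mpr ⟨a i, b i, a j, hne_ab i i, hne_aa i j h, hne_ba i j, rfl⟩
    · rw [htripb]
      exact Finset.card_eq_three.mpr ⟨a i, b i, b j, hne_ab i i, hne_ab i j, hne_bb i j h, rfl⟩
  have hmemS : ∀ B : Finset (Fin v),
      B ∈ S ↔ ∃ i j : Fin m, i ≠ j ∧ (B = {a i, b i, a j} ∨ B = {a i, b i, b j}) := by
    intro B
    constructor
    · intro hB
      obtain ⟨q, hq, rfl⟩ := Finset.mem_image.mp hB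
      obtain ⟨⟨i, j⟩, s⟩ := q
      have hij : i ≠ j := hQmem _ hq
      refine ⟨i, j, hij, ?_⟩
      cases s
      · exact Or.inl (htripa (i, j))
      · exact Or.inr (htripb (i, j))
    · rintro ⟨i, j, hij, (rfl | rfl)⟩
      · exact Finset.mem_image.mpr ⟨((i, j), false), hQmem' _ hij, htripa (i, j)⟩
      · exact Finset.mem_image.mpr ⟨((i, j), true), hQmem' _ hij, htripb (i, j)⟩
  have g_off : ∀ B ∉ S, g B = 0 := fun B hB =>
    hg2 B (fun hex => hB ((hmemS B).mpr hex))
  have g_on : ∀ q : (Fin m × Fin m) × Bool, q.1.1 ≠ q.1.2 →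
      g (trip a b q) = ε q.1.1 q.1.2 := by
    rintro ⟨⟨i, j⟩, s⟩ h
    replace h : i ≠ j := h
    cases s
    · rw [htripa]; exact (hg1 i j h).1
    · rw [htripb]; exact (hg1 i j h).2
  have hsum : ∀ F : Finset (Fin v) → ℤ, (∀ B, g B = 0 → F B = 0) →
      ∑ B : Finset (Fin v), F B = ∑ q ∈ Q, F (trip a b q) := by
    intro F hF
    rw [← Finset.sum_subset (Finset.subset_univ S) (fun B _ hB => hF B (g_off B hB))]
    exact Finset.sum_image hinj'
  have hDsub : D ⊆ Finset.univ ×ˢ Finset.univ := by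
    intro p hp
    simp [Finset.mem_product]
  have hDdiag : ∀ p ∈ Finset.univ ×ˢ Finset.univ, p ∉ D → p.1 = p.2 := by
    intro p hp hnp
    rw [hD, Finset.mem_offDiag] at hnp
    by_contra hne
    exact hnp ⟨Finset.mem_univ _, Finset.mem_univ _, hne⟩
  have hDsum : ∑ p ∈ D, ε p.1 p.2 = 0 := by
    rw [Finset.sum_subset hDsub (fun p hp hnp => by rw [hDdiag p hp hnp, hε0])]
    rw [Finset.sum_product]
    simp [hεbal]
  have hDcard : (D.card : ℤ) = (m : ℤ) * m - m := by
    have h1 : D.card = m * m - m := by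
      rw [hD, Finset.offDiag_card]
      simp
    rw [h1, Nat.cast_sub (Nat.le_mul_of_pos_left m (by omega))]
    push_cast
    ring
  -- trade, first half
  have trade1 : ∀ B : Finset (Fin v), B.card ≠ 3 → g B = 0 := by
    intro B hB3
    apply g_off
    intro hBS
    obtain ⟨q, hq, rfl⟩ := Finset.mem_image.mp hBS
    exact hB3 (hcard q (hQmem q hq))
  -- trade, second half
  have trade2 : ∀ P : Finset (Fin v), P.card = 2 →
      ∑ B ∈ Finset.univ.filter (fun B : Finset (Fin v) => B.card = 3 ∧ P ⊆ B), g B = 0 := by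
    intro P hP
    have e1 : ∑ B ∈ Finset.univ.filter (fun B : Finset (Fin v) => B.card = 3 ∧ P ⊆ B), g B
        = ∑ q ∈ Q, (if P ⊆ trip a b q then ε q.1.1 q.1.2 else 0) := by
      rw [Finset.sum_filter]
      rw [hsum (fun B => if B.card = 3 ∧ P ⊆ B then g B else 0) (fun B hB => by simp [hB])]
      refine Finset.sum_congr rfl (fun q hq => ?_)
      have h3 := hcard q (hQmem q hq)
      have h4 := g_on q (hQmem q hq)
      simp only [h3, h4, true_and]
    rw [e1, hQ, Finset.sum_product]
    have e2 : ∀ p ∈ D, (∑ s : Bool, if P ⊆ trip a b (p, s) then ε p.1 p.2 else 0)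
        = 2 * (if P = {a p.1, b p.1} then ε p.1 p.2 else 0)
          + ((if P = {a p.1, a p.2} then ε p.1 p.2 else 0)
            + (if P = {b p.1, a p.2} then ε p.1 p.2 else 0)
            + (if P = {a p.1, b p.2} then ε p.1 p.2 else 0)
            + (if P = {b p.1, b p.2} then ε p.1 p.2 else 0)) := by
      rintro ⟨i, j⟩ hp
      have hij : i ≠ j := (Finset.mem_offDiag.mp hp).2.2
      rw [Fintype.sum_bool]
      rw [htripa (i, j), htripb (i, j)]
      dsimp only
      simp only [pair_subset_triple hP (hne_ab i i) (hne_ab i j) (hne_bb i j hij),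
          pair_subset_triple hP (hne_ab i i) (hne_aa i j hij) (hne_ba i j)]
      rw [ite_or3 _ (fun hc => pair_ne_right (hne_ba i i) (hne_bb i j hij) (hc.1.symm.trans hc.2))
            (fun hc => pair_ne_left (hne_ab i i) (hne_ab i j) (hc.1.symm.trans hc.2))
            (fun hc => pair_ne_left (hne_ab i i) (hne_ab i j) (hc.1.symm.trans hc.2)),
          ite_or3 _ (fun hc => pair_ne_right (hne_ba i i) (hne_ba i j) (hc.1.symm.trans hc.2))
            (fun hc => pair_ne_left (hne_ab i i) (hne_aa i j hij) (hc.1.symm.trans hc.2))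
            (fun hc => pair_ne_left (hne_ab i i) (hne_aa i j hij) (hc.1.symm.trans hc.2))]
      ring
    rw [Finset.sum_congr rfl e2, Finset.sum_add_distrib]
    have z1 : ∑ p ∈ D, 2 * (if P = {a p.1, b p.1} then ε p.1 p.2 else 0) = 0 := by
      rw [← Finset.mul_sum]
      have z0 : ∑ p ∈ D, (if P = {a p.1, b p.1} then ε p.1 p.2 else 0) = 0 := by
        rw [Finset.sum_subset hDsub
          (fun p hp hnp => by rw [hDdiag p hp hnp, hε0]; simp)]
        rw [Finset.sum_product]
        refine Finset.sum_eq_zero (fun i _ => ?_)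
        by_cases hc : P = {a i, b i} <;> simp [hc, hεbal]
      rw [z0, mul_zero]
    have z2 : ∑ p ∈ D,
        ((if P = {a p.1, a p.2} then ε p.1 p.2 else 0)
          + (if P = {b p.1, a p.2} then ε p.1 p.2 else 0)
          + (if P = {a p.1, b p.2} then ε p.1 p.2 else 0)
          + (if P = {b p.1, b p.2} then ε p.1 p.2 else 0)) = 0 := by
      refine Finset.sum_involution (fun p _ => p.swap) ?_ ?_ ?_ ?_
      · rintro ⟨i, j⟩ hp
        show _ + ((if P = {a j, a i} then ε j i else 0)
          + (if P = {b j, a i} then ε j i else 0)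
          + (if P = {a j, b i} then ε j i else 0)
          + (if P = {b j, b i} then ε j i else 0)) = 0
        rw [Finset.pair_comm (a j) (a i), Finset.pair_comm (b j) (a i),
            Finset.pair_comm (a j) (b i), Finset.pair_comm (b j) (b i)]
        simp only [hεanti i j]
        rw [ite_neg0, ite_neg0, ite_neg0, ite_neg0]
        ring
      · rintro ⟨i, j⟩ hp h heq
        exact (Finset.mem_offDiag.mp hp).2.2 (congrArg Prod.snd heq)
      · rintro ⟨i, j⟩ hp
        exact Finset.mem_offDiag.mpr
          ⟨Finset.mem_univ _, Finset.mem_univ _, Ne.symm (Finset.mem_offDiag.mp hp).2.2⟩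
      · rintro ⟨i, j⟩ hp; rfl
    rw [z1, z2]
    ring
  -- simple
  have simple : isSimple v g := by
    intro B
    by_cases hB : ∃ i j : Fin m, i ≠ j ∧ (B = {a i, b i, a j} ∨ B = {a i, b i, b j})
    · obtain ⟨i, j, hij, hc⟩ := hB
      have hgB : g B = ε i j := by
        rcases hc with rfl | rfl
        · exact (hg1 i j hij).1
        · exact (hg1 i j hij).2
      rcases hε1 i j hij with h | h
      · right; right; rw [hgB, h]
      · left; rw [hgB, h]
    · right; left; exact hg2 B hB
  -- volume
  have vol : volume v g = (m : ℤ) * ((m : ℤ) - 1) := by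
    have evol : volume v g = ∑ q ∈ Q, max (ε q.1.1 q.1.2) 0 := by
      rw [show volume v g = ∑ B : Finset (Fin v), max (g B) 0 from rfl]
      rw [hsum (fun B => max (g B) 0) (fun B hB => by simp [hB])]
      exact Finset.sum_congr rfl (fun q hq => by rw [g_on q (hQmem q hq)])
    rw [evol, hQ, Finset.sum_product]
    have e3 : ∀ p ∈ D, (∑ s : Bool, max (ε (p, s).1.1 (p, s).1.2) 0) = ε p.1 p.2 + 1 := by
      rintro ⟨i, j⟩ hp
      have hij : i ≠ j := (Finset.mem_offDiag.mp hp).2.2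
      rw [Fintype.sum_bool]
      show max (ε i j) 0 + max (ε i j) 0 = ε i j + 1
      rcases hε1 i j hij with h | h <;> rw [h] <;> norm_num
    rw [Finset.sum_congr rfl e3, Finset.sum_add_distrib, hDsum, Finset.sum_const]
    simp only [nsmul_eq_mul, mul_one, zero_add]
    rw [hDcard]
    ring
  -- support
  have supp : {B : Finset (Fin v) | g B ≠ 0} =
      {B : Finset (Fin v) |
        ∃ i j : Fin m, i ≠ j ∧ (B = {a i, b i, a j} ∨ B = {a i, b i, b j})} := by
    ext B
    simp only [Set.mem_setOf_eq]
    constructor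
    · intro hne
      by_contra hB
      exact hne (hg2 B hB)
    · rintro ⟨i, j, hij, hc⟩ h0
      have hgB : g B = ε i j := by
        rcases hc with rfl | rfl
        · exact (hg1 i j hij).1
        · exact (hg1 i j hij).2
      rcases hε1 i j hij with h | h <;> rw [hgB, h] at h0 <;> norm_num at h0
  exact ⟨⟨trade1, trade2⟩, simple, vol, supp⟩
end

section
/- Let n ≥ 1, v = 4n+2, m = 2n+1, and for i ∈ {0,...,2n} set a_i = i and b_i = i + m in Fin v. Let ε : Fin m → Fin m → ℤ satisfy ε i i = 0, ε i j ∈ {1,-1} and ε j i = -ε i j for all i ≠ j, and Σ_j ε i j = 0 for every i (such ε encodes an Eulerian circuit of the complete graph on m vertices, which exists since m is odd). Define h : Finset (Fin v) → ℤ as follows: if B is a 3-element subset whose elements have pairwise distinct residues modulo m, then h B = (-1)^(number of elements of B that are ≥ m); if B = {a_i, b_i, a_j} or B = {a_i, b_i, b_j} with i ≠ j, then h B = ε i j; and h B = 0 for all other sets B. Then h is a (2,3,4n+2)-halving. -/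
set_option maxHeartbeats 3200000 in
/-- For `n ≥ 1`, `v = 4n+2`, `m = 2n+1`, `aᵢ = i`, `bᵢ = i + m`, and a balanced
orientation `ε` of `K_m`, the function `h` equal to `(-1)^(#{x ∈ B : x ≥ m})` on 3-subsets
with pairwise distinct residues mod `m`, to `ε i j` on `{aᵢ,bᵢ,aⱼ}` and `{aᵢ,bᵢ,bⱼ}` for
`i ≠ j`, and to 0 elsewhere, is a `(2,3,4n+2)`-halving. -/
theorem partition_method_halving
    (n : ℕ) (hn : 1 ≤ n) (v m : ℕ) (hv : v = 4 * n + 2) (hm : m = 2 * n + 1)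
    (a b : Fin m → Fin v)
    (ha : ∀ i : Fin m, (a i : ℕ) = (i : ℕ)) (hb : ∀ i : Fin m, (b i : ℕ) = (i : ℕ) + m)
    (ε : Fin m → Fin m → ℤ)
    (hε0 : ∀ i, ε i i = 0)
    (hε1 : ∀ i j, i ≠ j → ε i j = 1 ∨ ε i j = -1)
    (hεanti : ∀ i j, ε j i = -ε i j)
    (hεbal : ∀ i, ∑ j : Fin m, ε i j = 0)
    (h : Finset (Fin v) → ℤ)
    (h1 : ∀ B : Finset (Fin v), B.card = 3 →
      Set.InjOn (fun x : Fin v => (x : ℕ) % m) ↑B →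
      h B = (-1) ^ (B.filter (fun x : Fin v => m ≤ (x : ℕ))).card)
    (h2 : ∀ i j : Fin m, i ≠ j → h {a i, b i, a j} = ε i j ∧ h {a i, b i, b j} = ε i j)
    (h3 : ∀ B : Finset (Fin v),
      ¬ (B.card = 3 ∧ Set.InjOn (fun x : Fin v => (x : ℕ) % m) ↑B) →
      (¬ ∃ i j : Fin m, i ≠ j ∧ (B = {a i, b i, a j} ∨ B = {a i, b i, b j})) →
      h B = 0) :
    isHalving v h := by
  have hmpos : 0 < m := by omega
  have hv2m : v = 2 * m := by omega
  -- basic facts about a, b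
  have haval : ∀ i : Fin m, ((a i : ℕ)) < m := fun i => by rw [ha]; exact i.isLt
  have hbval : ∀ i : Fin m, m ≤ ((b i : ℕ)) := fun i => by rw [hb]; omega
  have hab : ∀ i j : Fin m, a i ≠ b j := by
    intro i j hEq
    have h' := congrArg Fin.val hEq
    rw [ha, hb] at h'
    have := i.isLt
    omega
  have hainj : ∀ i j : Fin m, a i = a j → i = j := by
    intro i j hEq
    have h' := congrArg Fin.val hEq
    rw [ha, ha] at h'
    exact Fin.ext h'
  have hbinj : ∀ i j : Fin m, b i = b j → i = j := by
    intro i j hEq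
    have h' := congrArg Fin.val hEq
    rw [hb, hb] at h'
    exact Fin.ext (by omega)
  have hra : ∀ i : Fin m, (a i : ℕ) % m = i := fun i => by
    rw [ha]; exact Nat.mod_eq_of_lt i.isLt
  have hrb : ∀ i : Fin m, (b i : ℕ) % m = i := fun i => by
    rw [hb, Nat.add_mod_right]; exact Nat.mod_eq_of_lt i.isLt
  have hsurj : ∀ x : Fin v, ∃ i : Fin m, x = a i ∨ x = b i := by
    intro x
    by_cases hx : (x : ℕ) < m
    · exact ⟨⟨x, hx⟩, Or.inl (Fin.ext (by rw [ha]))⟩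
    · have hx2 : (x : ℕ) < 2 * m := by have := x.isLt; omega
      refine ⟨⟨(x : ℕ) - m, by omega⟩, Or.inr (Fin.ext ?_)⟩
      rw [hb]; simp; omega
  have hcard3 : ∀ x y z : Fin v, x ≠ y → x ≠ z → y ≠ z →
      ({x, y, z} : Finset (Fin v)).card = 3 := by
    intro x y z hxy hxz hyz
    exact Finset.card_eq_three.mpr ⟨x, y, z, hxy, hxz, hyz, rfl⟩
  have hzero : ∀ B : Finset (Fin v), B.card ≠ 3 → h B = 0 := by
    intro B hB
    apply h3 B (fun hc => hB hc.1)
    rintro ⟨i, j, hij, rfl | rfl⟩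
    · exact hB (hcard3 _ _ _ (hab i i) (fun hEq => hij (hainj _ _ hEq)) (Ne.symm (hab j i)))
    · exact hB (hcard3 _ _ _ (hab i i) (hab i j) (fun hEq => hij (hbinj _ _ hEq)))
  -- classification of 3-sets
  have hclassify : ∀ B : Finset (Fin v), B.card = 3 →
      (Set.InjOn (fun x : Fin v => (x : ℕ) % m) ↑B) ∨
      ∃ i j : Fin m, i ≠ j ∧ (B = {a i, b i, a j} ∨ B = {a i, b i, b j}) := by
    intro B hB
    by_cases hInj : Set.InjOn (fun x : Fin v => (x : ℕ) % m) ↑B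
    · exact Or.inl hInj
    right
    rw [Set.InjOn] at hInj
    push_neg at hInj
    obtain ⟨x, hx, y, hy, hr, hxy⟩ := hInj
    simp only [Finset.mem_coe] at hx hy
    obtain ⟨i, hxi⟩ := hsurj x
    obtain ⟨i', hyi⟩ := hsurj y
    have hrx : (x : ℕ) % m = i := by rcases hxi with rfl | rfl; exacts [hra i, hrb i]
    have hry : (y : ℕ) % m = i' := by rcases hyi with rfl | rfl; exacts [hra i', hrb i']
    have hii' : i = i' := Fin.ext (by rw [← hrx, ← hry]; exact hr)
    subst hii'
    have hpair : ({x, y} : Finset (Fin v)) = {a i, b i} := by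
      rcases hxi with rfl | rfl <;> rcases hyi with rfl | rfl
      · exact absurd rfl hxy
      · rfl
      · exact Finset.pair_comm _ _
      · exact absurd rfl hxy
    have hsub : ({a i, b i} : Finset (Fin v)) ⊆ B := by
      rw [← hpair]
      exact Finset.insert_subset hx (Finset.singleton_subset_iff.mpr hy)
    have hcards : ({a i, b i} : Finset (Fin v)).card = 2 := Finset.card_pair (hab i i)
    have hne : (B \ {a i, b i}).Nonempty := by
      rw [← Finset.card_pos, Finset.card_sdiff_of_subset hsub, hcards, hB]; omega
    obtain ⟨z, hz⟩ := hne
    rw [Finset.mem_sdiff] at hz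
    have hBz : B = insert z {a i, b i} := by
      symm
      apply Finset.eq_of_subset_of_card_le (Finset.insert_subset hz.1 hsub)
      rw [Finset.card_insert_of_notMem hz.2, hcards, hB]
    obtain ⟨k, hzk⟩ := hsurj z
    have hki : k ≠ i := by
      rintro rfl
      rcases hzk with rfl | rfl <;> exact hz.2 (by simp)
    refine ⟨i, k, Ne.symm hki, ?_⟩
    rcases hzk with rfl | rfl
    · left; rw [hBz]; ext u; simp; tauto
    · right; rw [hBz]; ext u; simp; tauto
  -- ±1 on all 3-sets
  have hpm1 : ∀ B : Finset (Fin v), B.card = 3 → h B = 1 ∨ h B = -1 := by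
    intro B hB
    rcases hclassify B hB with hInj | ⟨i, j, hij, rfl | rfl⟩
    · rw [h1 B hB hInj]
      rcases Nat.even_or_odd (B.filter (fun x : Fin v => m ≤ (x : ℕ))).card with he | ho
      · left; exact he.neg_one_pow
      · right; exact ho.neg_one_pow
    · rw [(h2 i j hij).1]; exact hε1 i j hij
    · rw [(h2 i j hij).2]; exact hε1 i j hij
  -- reduction of the pair-sum
  have key : ∀ P : Finset (Fin v), P.card = 2 →
      ∑ B ∈ Finset.univ.filter (fun B : Finset (Fin v) => B.card = 3 ∧ P ⊆ B), h B
        = ∑ z : Fin v, h (insert z P) := by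
    intro P hP
    have himg : Finset.univ.filter (fun B : Finset (Fin v) => B.card = 3 ∧ P ⊆ B)
        = Pᶜ.image (fun z => insert z P) := by
      ext B
      simp only [Finset.mem_filter, Finset.mem_univ, true_and, Finset.mem_image,
        Finset.mem_compl]
      constructor
      · rintro ⟨hc, hsub⟩
        have hne : (B \ P).Nonempty := by
          rw [← Finset.card_pos, Finset.card_sdiff_of_subset hsub, hP, hc]; omega
        obtain ⟨z, hz⟩ := hne
        rw [Finset.mem_sdiff] at hz
        refine ⟨z, hz.2, ?_⟩
        apply Finset.eq_of_subset_of_card_le (Finset.insert_subset hz.1 hsub)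
        rw [Finset.card_insert_of_notMem hz.2, hP, hc]
      · rintro ⟨z, hz, rfl⟩
        exact ⟨by rw [Finset.card_insert_of_notMem hz, hP], Finset.subset_insert _ _⟩
    rw [himg, Finset.sum_image ?_]
    · apply Finset.sum_subset (Finset.subset_univ _)
      intro z _ hz
      rw [Finset.mem_compl, not_not] at hz
      rw [Finset.insert_eq_self.mpr hz]
      exact hzero P (by omega)
    · intro z hz z' _ hEq
      rw [Finset.mem_coe, Finset.mem_compl] at hz
      have : z ∈ insert z' P := (show insert z P = insert z' P from hEq) ▸ Finset.mem_insert_self z P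
      rcases Finset.mem_insert.mp this with h' | h'
      · exact h'
      · exact absurd h' hz
  -- decomposition of sums over Fin v
  have decomp : ∀ f : Fin v → ℤ,
      ∑ z : Fin v, f z = ∑ k : Fin m, (f (a k) + f (b k)) := by
    intro f
    have huniv : (Finset.univ : Finset (Fin v))
        = Finset.univ.image a ∪ Finset.univ.image b := by
      ext x
      simp only [Finset.mem_univ, true_iff, Finset.mem_union, Finset.mem_image]
      obtain ⟨i, hi | hi⟩ := hsurj x
      · exact Or.inl ⟨i, trivial, hi.symm⟩
      · exact Or.inr ⟨i, trivial, hi.symm⟩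
    have hdisj : Disjoint (Finset.univ.image a) (Finset.univ.image b) := by
      rw [Finset.disjoint_left]
      rintro x hx hx'
      simp only [Finset.mem_image] at hx hx'
      obtain ⟨i, _, rfl⟩ := hx
      obtain ⟨j, _, hEq⟩ := hx'
      exact hab i j hEq.symm
    rw [huniv, Finset.sum_union hdisj,
      Finset.sum_image (fun i _ j _ hEq => hainj i j hEq),
      Finset.sum_image (fun i _ j _ hEq => hbinj i j hEq),
      ← Finset.sum_add_distrib]
  -- the vanishing k-term (distinct residues)
  have hterm0 : ∀ (x y : Fin v) (i j k : Fin m), (x : ℕ) % m = i → (y : ℕ) % m = j →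
      i ≠ j → k ≠ i → k ≠ j →
      h (insert (a k) {x, y}) + h (insert (b k) {x, y}) = 0 := by
    intro x y i j k hrx hry hij hki hkj
    have hijv : (i : ℕ) ≠ (j : ℕ) := fun hEq => hij (Fin.ext hEq)
    have hkiv : (k : ℕ) ≠ (i : ℕ) := fun hEq => hki (Fin.ext hEq)
    have hkjv : (k : ℕ) ≠ (j : ℕ) := fun hEq => hkj (Fin.ext hEq)
    have hxy : x ≠ y := by
      rintro rfl; rw [hrx] at hry; exact hijv hry
    have hax : a k ≠ x := by
      rintro rfl; rw [hra k] at hrx; exact hkiv hrx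
    have hay : a k ≠ y := by
      rintro rfl; rw [hra k] at hry; exact hkjv hry
    have hbx : b k ≠ x := by
      rintro rfl; rw [hrb k] at hrx; exact hkiv hrx
    have hby : b k ≠ y := by
      rintro rfl; rw [hrb k] at hry; exact hkjv hry
    have hinj3 : ∀ z : Fin v, (z : ℕ) % m = k →
        Set.InjOn (fun u : Fin v => (u : ℕ) % m) (↑({z, x, y} : Finset (Fin v))) := by
      intro z hrz u hu w hw huw
      simp only [Finset.coe_insert, Set.mem_insert_iff, Finset.coe_singleton,
        Set.mem_singleton_iff] at hu hw
      rcases hu with rfl | rfl | rfl <;> rcases hw with rfl | rfl | rfl <;>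
        simp only [hrx, hry, hrz] at huw ⊢ <;> first | rfl | omega
    have hc1 : ({a k, x, y} : Finset (Fin v)).card = 3 := hcard3 _ _ _ hax hay hxy
    have hc2 : ({b k, x, y} : Finset (Fin v)).card = 3 := hcard3 _ _ _ hbx hby hxy
    rw [h1 _ hc1 (hinj3 (a k) (hra k)), h1 _ hc2 (hinj3 (b k) (hrb k))]
    have hf1 : (insert (a k) ({x, y} : Finset (Fin v))).filter (fun u : Fin v => m ≤ (u : ℕ))
        = ({x, y} : Finset (Fin v)).filter (fun u : Fin v => m ≤ (u : ℕ)) := by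
      rw [Finset.filter_insert, if_neg (by push_neg; exact haval k)]
    have hf2 : (insert (b k) ({x, y} : Finset (Fin v))).filter (fun u : Fin v => m ≤ (u : ℕ))
        = insert (b k) (({x, y} : Finset (Fin v)).filter (fun u : Fin v => m ≤ (u : ℕ))) := by
      rw [Finset.filter_insert, if_pos (hbval k)]
    rw [hf1, hf2, Finset.card_insert_of_notMem (by
      intro hmem
      have := Finset.mem_of_mem_filter _ hmem
      simp only [Finset.mem_insert, Finset.mem_singleton] at this
      tauto)]
    rw [pow_succ]
    ring
  -- the ε-term
  have hterm1 : ∀ (x y : Fin v) (i j : Fin m), i ≠ j →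
      (x = a i ∨ x = b i) → (y = a j ∨ y = b j) →
      h (insert (a i) {x, y}) + h (insert (b i) {x, y}) = ε i j := by
    intro x y i j hij hx hy
    have hay : a i ≠ y := by
      rcases hy with rfl | rfl
      · exact fun hEq => hij (hainj _ _ hEq)
      · exact hab i j
    have hby : b i ≠ y := by
      rcases hy with rfl | rfl
      · exact Ne.symm (hab j i)
      · exact fun hEq => hij (hbinj _ _ hEq)
    rcases hx with rfl | rfl
    · rw [Finset.insert_eq_self.mpr (Finset.mem_insert_self _ _),
        hzero {a i, y} (by rw [Finset.card_pair hay]; omega),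
        Finset.insert_comm]
      rcases hy with rfl | rfl
      · rw [(h2 i j hij).1]; ring
      · rw [(h2 i j hij).2]; ring
    · rw [show (insert (b i) {b i, y} : Finset (Fin v)) = {b i, y} from
        Finset.insert_eq_self.mpr (Finset.mem_insert_self _ _),
        hzero {b i, y} (by rw [Finset.card_pair hby]; omega)]
      rcases hy with rfl | rfl
      · rw [(h2 i j hij).1]; ring
      · rw [(h2 i j hij).2]; ring
  -- the case-A term
  have htermA : ∀ i k : Fin m,
      h (insert (a k) {a i, b i}) + h (insert (b k) {a i, b i}) = 2 * ε i k := by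
    intro i k
    by_cases hik : k = i
    · subst hik
      have e1 : (insert (a k) {a k, b k} : Finset (Fin v)) = {a k, b k} :=
        Finset.insert_idem _ _
      have e2 : (insert (b k) {a k, b k} : Finset (Fin v)) = {a k, b k} := by
        rw [Finset.insert_comm]
        exact congrArg _ (Finset.insert_eq_self.mpr (Finset.mem_singleton_self _))
      rw [e1, e2, hzero {a k, b k} (by rw [Finset.card_pair (hab k k)]; omega), hε0]
      ring
    · have e1 : (insert (a k) {a i, b i} : Finset (Fin v)) = {a i, b i, a k} := by
        ext u; simp; tauto
      have e2 : (insert (b k) {a i, b i} : Finset (Fin v)) = {a i, b i, b k} := by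
        ext u; simp; tauto
      rw [e1, e2, (h2 i k (fun hEq => hik hEq.symm)).1,
        (h2 i k (fun hEq => hik hEq.symm)).2]
      ring
  refine ⟨⟨hzero, ?_⟩, ?_, hpm1⟩
  · -- trade balance
    intro P hP
    rw [key P hP]
    obtain ⟨x, y, hxy, rfl⟩ := Finset.card_eq_two.mp hP
    rw [decomp (fun z => h (insert z {x, y}))]
    obtain ⟨i, hx⟩ := hsurj x
    obtain ⟨j, hy⟩ := hsurj y
    by_cases hij : i = j
    · subst hij
      have hP' : ({x, y} : Finset (Fin v)) = {a i, b i} := by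
        rcases hx with rfl | rfl <;> rcases hy with rfl | rfl
        · exact absurd rfl hxy
        · rfl
        · exact Finset.pair_comm _ _
        · exact absurd rfl hxy
      rw [hP']
      rw [Finset.sum_congr rfl (fun k _ => htermA i k), ← Finset.mul_sum, hεbal]
      ring
    · have hrx : (x : ℕ) % m = i := by rcases hx with rfl | rfl; exacts [hra i, hrb i]
      have hry : (y : ℕ) % m = j := by rcases hy with rfl | rfl; exacts [hra j, hrb j]
      have hsub : ({i, j} : Finset (Fin m)) ⊆ Finset.univ := Finset.subset_univ _
      rw [← Finset.sum_sdiff hsub]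
      have hz1 : ∑ k ∈ Finset.univ \ ({i, j} : Finset (Fin m)),
          (h (insert (a k) {x, y}) + h (insert (b k) {x, y})) = 0 := by
        apply Finset.sum_eq_zero
        intro k hk
        rw [Finset.mem_sdiff, Finset.mem_insert, Finset.mem_singleton] at hk
        push_neg at hk
        exact hterm0 x y i j k hrx hry hij hk.2.1 hk.2.2
      rw [hz1, Finset.sum_pair hij, hterm1 x y i j hij hx hy]
      have hyx : ({x, y} : Finset (Fin v)) = {y, x} := Finset.pair_comm _ _
      rw [hyx, hterm1 y x j i (Ne.symm hij) hy hx, hεanti]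
      ring
  · -- simple
    intro B
    by_cases hB : B.card = 3
    · rcases hpm1 B hB with h' | h'
      · right; right; exact h'
      · left; exact h'
    · right; left; exact hzero B hB
end

section
/- Let n ≥ 1, v = 4n+2, m = 2n+1, and for i ∈ {0,...,2n} set a_i = i and b_i = i + m in Fin v. Let S be a Steiner triple system on {0,...,2n} together with an orientation of its blocks. Then h1 = Σ over the oriented blocks of S, of the sum over the three directed edges (i,j) of that block of the directed-edge trades E(i,j), is a simple T(2,3,4n+2) trade of volume 2·C(2n+1,2) = 2n(2n+1). -/
set_option linter.unusedSectionVars false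

namespace StsTrade

/-- All-positive companion of `edgeTrade`. -/
def uEdge (v : ℕ) {ι : Type*} (a b : ι → Fin v) (i j : ι) : Finset (Fin v) → ℤ :=
  fun B => (if B = {a i, b i, a j} then 1 else 0) + (if B = {a i, b i, b j} then 1 else 0)
    + (if B = {a j, b j, a i} then 1 else 0) + (if B = {a j, b j, b i} then 1 else 0)

lemma pair_eq' {α : Type*} [DecidableEq α] {p q x y : α} (hxy : x ≠ y) :
    (({p, q} : Finset α) = {x, y}) ↔ ((p = x ∧ q = y) ∨ (p = y ∧ q = x)) := by
  constructor
  · intro h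
    have hp : p ∈ ({x, y} : Finset α) := h ▸ (by simp)
    have hq : q ∈ ({x, y} : Finset α) := h ▸ (by simp)
    have hx : x ∈ ({p, q} : Finset α) := by rw [h]; simp
    have hy : y ∈ ({p, q} : Finset α) := by rw [h]; simp
    simp only [Finset.mem_insert, Finset.mem_singleton] at hp hq hx hy
    rcases hp with rfl | rfl <;> rcases hq with rfl | rfl <;> tauto
  · rintro (⟨rfl, rfl⟩ | ⟨rfl, rfl⟩)
    · rfl
    · exact (Finset.pair_comm q p).symm

lemma subset_triple_iff {α : Type*} [DecidableEq α] {P : Finset α} {x y z : α} (hP : P.card = 2) :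
    P ⊆ {x, y, z} ↔ P = {x, y} ∨ P = {x, z} ∨ P = {y, z} := by
  obtain ⟨p, q, hpq, rfl⟩ := Finset.card_eq_two.mp hP
  constructor
  · intro h
    have hp : p ∈ ({x, y, z} : Finset α) := h (by simp)
    have hq : q ∈ ({x, y, z} : Finset α) := h (by simp)
    simp only [Finset.mem_insert, Finset.mem_singleton] at hp hq
    rcases hp with rfl|rfl|rfl <;> rcases hq with rfl|rfl|rfl <;>
      simp_all [Finset.pair_comm]
  · rintro (h|h|h) <;> rw [h] <;> simp [Finset.insert_subset_iff]

variable {v m : ℕ} {a b : Fin m → Fin v}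

section
variable (ha : ∀ i : Fin m, (a i : ℕ) = (i : ℕ)) (hb : ∀ i : Fin m, (b i : ℕ) = (i : ℕ) + m)
include ha hb

lemma ab_ne (i j : Fin m) : a i ≠ b j := by
  intro h
  have := congrArg Fin.val h
  rw [ha, hb] at this
  have := i.isLt
  omega

lemma a_inj {i j : Fin m} (h : a i = a j) : i = j := by
  have := congrArg Fin.val h
  rw [ha, ha] at this
  exact Fin.ext this

lemma b_inj {i j : Fin m} (h : b i = b j) : i = j := by
  have := congrArg Fin.val h
  rw [hb, hb] at this
  exact Fin.ext (by omega)

lemma card_aa {i j : Fin m} (hij : i ≠ j) : ({a i, b i, a j} : Finset (Fin v)).card = 3 := by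
  refine Finset.card_eq_three.mpr ⟨a i, b i, a j, ab_ne ha hb i i, ?_, ?_, rfl⟩
  · exact fun h => hij (a_inj ha hb h)
  · exact fun h => ab_ne ha hb j i h.symm

lemma card_ab {i j : Fin m} (hij : i ≠ j) : ({a i, b i, b j} : Finset (Fin v)).card = 3 := by
  refine Finset.card_eq_three.mpr ⟨a i, b i, b j, ab_ne ha hb i i, ab_ne ha hb i j, ?_, rfl⟩
  exact fun h => hij (b_inj ha hb h)

/-- Master uniqueness lemma for the support triples. -/
lemma tri_eq {i j k l : Fin m} (hij : i ≠ j) (hkl : k ≠ l) {x y : Fin v}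
    (hx : x = a j ∨ x = b j) (hy : y = a l ∨ y = b l)
    (h : ({a i, b i, x} : Finset (Fin v)) = {a k, b k, y}) : i = k ∧ x = y := by
  rw [Finset.ext_iff] at h
  have h1 := h (b i)
  have h2 := h (b k)
  have h3 := h x
  have h4 := h y
  have h5 := h (a i)
  have h6 := h (a k)
  have hi := i.isLt; have hj := j.isLt; have hk' := k.isLt; have hl := l.isLt
  rcases hx with rfl | rfl <;> rcases hy with rfl | rfl <;>
    (simp only [Finset.mem_insert, Finset.mem_singleton, ne_eq, Fin.ext_iff, ha, hb, true_or,
      or_true, true_iff, iff_true] at h1 h2 h3 h4 h5 h6 hij hkl ⊢) <;>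
    omega

lemma eq_iff_aa {i j x y : Fin m} (hij : i ≠ j) (hxy : x ≠ y) :
    (({a i, b i, a j} : Finset (Fin v)) = {a x, b x, a y}) ↔ (i = x ∧ j = y) := by
  constructor
  · intro h
    obtain ⟨h1, h2⟩ := tri_eq ha hb hij hxy (Or.inl rfl) (Or.inl rfl) h
    exact ⟨h1, a_inj ha hb h2⟩
  · rintro ⟨rfl, rfl⟩; rfl

lemma eq_iff_ab {i j x y : Fin m} (hij : i ≠ j) (hxy : x ≠ y) :
    (({a i, b i, a j} : Finset (Fin v)) = {a x, b x, b y}) ↔ False := by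
  simp only [iff_false]
  intro h
  obtain ⟨h1, h2⟩ := tri_eq ha hb hij hxy (Or.inl rfl) (Or.inr rfl) h
  exact ab_ne ha hb j y h2

lemma eq_iff_ba {i j x y : Fin m} (hij : i ≠ j) (hxy : x ≠ y) :
    (({a i, b i, b j} : Finset (Fin v)) = {a x, b x, a y}) ↔ False := by
  simp only [iff_false]
  intro h
  obtain ⟨h1, h2⟩ := tri_eq ha hb hij hxy (Or.inr rfl) (Or.inl rfl) h
  exact ab_ne ha hb y j h2.symm

lemma eq_iff_bb {i j x y : Fin m} (hij : i ≠ j) (hxy : x ≠ y) :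
    (({a i, b i, b j} : Finset (Fin v)) = {a x, b x, b y}) ↔ (i = x ∧ j = y) := by
  constructor
  · intro h
    obtain ⟨h1, h2⟩ := tri_eq ha hb hij hxy (Or.inr rfl) (Or.inr rfl) h
    exact ⟨h1, b_inj ha hb h2⟩
  · rintro ⟨rfl, rfl⟩; rfl

lemma edge_eval_a {i j x y : Fin m} (hij : i ≠ j) (hxy : x ≠ y) :
    edgeTrade v a b x y {a i, b i, a j} =
      (if i = x ∧ j = y then (1:ℤ) else 0) - (if i = y ∧ j = x then 1 else 0) := by
  simp only [edgeTrade, eq_iff_aa ha hb hij hxy, eq_iff_ab ha hb hij hxy,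
    eq_iff_aa ha hb hij hxy.symm, eq_iff_ab ha hb hij hxy.symm, if_false]
  ring

lemma edge_eval_b {i j x y : Fin m} (hij : i ≠ j) (hxy : x ≠ y) :
    edgeTrade v a b x y {a i, b i, b j} =
      (if i = x ∧ j = y then (1:ℤ) else 0) - (if i = y ∧ j = x then 1 else 0) := by
  simp only [edgeTrade, eq_iff_bb ha hb hij hxy, eq_iff_ba ha hb hij hxy,
    eq_iff_bb ha hb hij hxy.symm, eq_iff_ba ha hb hij hxy.symm, if_false]
  ring

lemma uedge_eval_a {i j x y : Fin m} (hij : i ≠ j) (hxy : x ≠ y) :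
    uEdge v a b x y {a i, b i, a j} =
      (if i = x ∧ j = y then (1:ℤ) else 0) + (if i = y ∧ j = x then 1 else 0) := by
  simp only [uEdge, eq_iff_aa ha hb hij hxy, eq_iff_ab ha hb hij hxy,
    eq_iff_aa ha hb hij hxy.symm, eq_iff_ab ha hb hij hxy.symm, if_false]
  ring

lemma uedge_eval_b {i j x y : Fin m} (hij : i ≠ j) (hxy : x ≠ y) :
    uEdge v a b x y {a i, b i, b j} =
      (if i = x ∧ j = y then (1:ℤ) else 0) + (if i = y ∧ j = x then 1 else 0) := by
  simp only [uEdge, eq_iff_bb ha hb hij hxy, eq_iff_ba ha hb hij hxy,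
    eq_iff_bb ha hb hij hxy.symm, eq_iff_ba ha hb hij hxy.symm, if_false]
  ring

end

lemma block_val_mem {i j x y z : Fin m} (hij : i ≠ j) (hxy : x ≠ y) (hxz : x ≠ z) (hyz : y ≠ z)
    (hmem : (i = x ∨ i = y ∨ i = z) ∧ (j = x ∨ j = y ∨ j = z)) :
    ((((if i = x ∧ j = y then (1:ℤ) else 0) - (if i = y ∧ j = x then 1 else 0)) +
      ((if i = y ∧ j = z then 1 else 0) - (if i = z ∧ j = y then 1 else 0)) +
      ((if i = z ∧ j = x then 1 else 0) - (if i = x ∧ j = z then 1 else 0)) = 1) ∨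
     (((if i = x ∧ j = y then (1:ℤ) else 0) - (if i = y ∧ j = x then 1 else 0)) +
      ((if i = y ∧ j = z then 1 else 0) - (if i = z ∧ j = y then 1 else 0)) +
      ((if i = z ∧ j = x then 1 else 0) - (if i = x ∧ j = z then 1 else 0)) = -1)) ∧
    (((if i = x ∧ j = y then (1:ℤ) else 0) + (if i = y ∧ j = x then 1 else 0)) +
      ((if i = y ∧ j = z then 1 else 0) + (if i = z ∧ j = y then 1 else 0)) +
      ((if i = z ∧ j = x then 1 else 0) + (if i = x ∧ j = z then 1 else 0)) = 1) := by
  obtain ⟨h1, h2⟩ := hmem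
  rcases h1 with rfl|rfl|rfl <;> rcases h2 with rfl|rfl|rfl <;>
    simp_all [Fin.ext_iff] <;> split_ifs <;> omega

lemma block_val_notmem {i j x y z : Fin m} (hij : i ≠ j) (hxy : x ≠ y) (hxz : x ≠ z) (hyz : y ≠ z)
    (hmem : ¬((i = x ∨ i = y ∨ i = z) ∧ (j = x ∨ j = y ∨ j = z))) :
    ((((if i = x ∧ j = y then (1:ℤ) else 0) - (if i = y ∧ j = x then 1 else 0)) +
      ((if i = y ∧ j = z then 1 else 0) - (if i = z ∧ j = y then 1 else 0)) +
      ((if i = z ∧ j = x then 1 else 0) - (if i = x ∧ j = z then 1 else 0)) = 0)) ∧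
    (((if i = x ∧ j = y then (1:ℤ) else 0) + (if i = y ∧ j = x then 1 else 0)) +
      ((if i = y ∧ j = z then 1 else 0) + (if i = z ∧ j = y then 1 else 0)) +
      ((if i = z ∧ j = x then 1 else 0) + (if i = x ∧ j = z then 1 else 0)) = 0) := by
  simp only [ne_eq, Fin.ext_iff] at hij hxy hxz hyz hmem ⊢
  split_ifs <;> omega

section
variable (ha : ∀ i : Fin m, (a i : ℕ) = (i : ℕ)) (hb : ∀ i : Fin m, (b i : ℕ) = (i : ℕ) + m)
include ha hb

/-- If `B` has no relevant shape, every block term vanishes. -/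
lemma term_zero {x y z : Fin m} (h12 : x ≠ y) (h13 : x ≠ z) (h23 : y ≠ z) (B : Finset (Fin v))
    (hne : ∀ u w : Fin m, u ≠ w → B ≠ {a u, b u, a w} ∧ B ≠ {a u, b u, b w}) :
    edgeTrade v a b x y B + edgeTrade v a b y z B + edgeTrade v a b z x B = 0 ∧
    uEdge v a b x y B + uEdge v a b y z B + uEdge v a b z x B = 0 := by
  simp [edgeTrade, uEdge, (hne x y h12).1, (hne x y h12).2, (hne y x h12.symm).1,
    (hne y x h12.symm).2, (hne y z h23).1, (hne y z h23).2, (hne z y h23.symm).1,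
    (hne z y h23.symm).2, (hne z x h13.symm).1, (hne z x h13.symm).2, (hne x z h13).1,
    (hne x z h13).2]

/-- Pointwise classification of the STS sum. -/
lemma pointwise (S : Finset (Fin m × Fin m × Fin m))
    (hSdist : ∀ t ∈ S, t.1 ≠ t.2.1 ∧ t.1 ≠ t.2.2 ∧ t.2.1 ≠ t.2.2)
    (hSsts : ∀ x y : Fin m, x ≠ y → ∃! t, t ∈ S ∧
      (x = t.1 ∨ x = t.2.1 ∨ x = t.2.2) ∧ (y = t.1 ∨ y = t.2.1 ∨ y = t.2.2))
    (B : Finset (Fin v)) :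
    ((∑ t ∈ S, (edgeTrade v a b t.1 t.2.1 B + edgeTrade v a b t.2.1 t.2.2 B +
        edgeTrade v a b t.2.2 t.1 B) = 0) ∧
      (∑ t ∈ S, (uEdge v a b t.1 t.2.1 B + uEdge v a b t.2.1 t.2.2 B +
        uEdge v a b t.2.2 t.1 B) = 0)) ∨
    (((∑ t ∈ S, (edgeTrade v a b t.1 t.2.1 B + edgeTrade v a b t.2.1 t.2.2 B +
        edgeTrade v a b t.2.2 t.1 B) = 1) ∨
      (∑ t ∈ S, (edgeTrade v a b t.1 t.2.1 B + edgeTrade v a b t.2.1 t.2.2 B +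
        edgeTrade v a b t.2.2 t.1 B) = -1)) ∧
      (∑ t ∈ S, (uEdge v a b t.1 t.2.1 B + uEdge v a b t.2.1 t.2.2 B +
        uEdge v a b t.2.2 t.1 B) = 1)) := by
  by_cases hB : ∃ i j : Fin m, i ≠ j ∧ (B = {a i, b i, a j} ∨ B = {a i, b i, b j})
  · obtain ⟨i, j, hij, hBeq⟩ := hB
    right
    obtain ⟨t0, ⟨ht0S, hmem0⟩, huniq⟩ := hSsts i j hij
    have heval : ∀ t : Fin m × Fin m × Fin m, t.1 ≠ t.2.1 → t.1 ≠ t.2.2 → t.2.1 ≠ t.2.2 →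
        (edgeTrade v a b t.1 t.2.1 B + edgeTrade v a b t.2.1 t.2.2 B +
          edgeTrade v a b t.2.2 t.1 B =
          ((if i = t.1 ∧ j = t.2.1 then (1:ℤ) else 0) - (if i = t.2.1 ∧ j = t.1 then 1 else 0)) +
          ((if i = t.2.1 ∧ j = t.2.2 then 1 else 0) - (if i = t.2.2 ∧ j = t.2.1 then 1 else 0)) +
          ((if i = t.2.2 ∧ j = t.1 then 1 else 0) - (if i = t.1 ∧ j = t.2.2 then 1 else 0))) ∧
        (uEdge v a b t.1 t.2.1 B + uEdge v a b t.2.1 t.2.2 B + uEdge v a b t.2.2 t.1 B =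
          ((if i = t.1 ∧ j = t.2.1 then (1:ℤ) else 0) + (if i = t.2.1 ∧ j = t.1 then 1 else 0)) +
          ((if i = t.2.1 ∧ j = t.2.2 then 1 else 0) + (if i = t.2.2 ∧ j = t.2.1 then 1 else 0)) +
          ((if i = t.2.2 ∧ j = t.1 then 1 else 0) + (if i = t.1 ∧ j = t.2.2 then 1 else 0))) := by
      intro t h12 h13 h23
      rcases hBeq with rfl | rfl
      · rw [edge_eval_a ha hb hij h12, edge_eval_a ha hb hij h23, edge_eval_a ha hb hij h13.symm,
          uedge_eval_a ha hb hij h12, uedge_eval_a ha hb hij h23, uedge_eval_a ha hb hij h13.symm]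
        exact ⟨rfl, rfl⟩
      · rw [edge_eval_b ha hb hij h12, edge_eval_b ha hb hij h23, edge_eval_b ha hb hij h13.symm,
          uedge_eval_b ha hb hij h12, uedge_eval_b ha hb hij h23, uedge_eval_b ha hb hij h13.symm]
        exact ⟨rfl, rfl⟩
    have hzero : ∀ t ∈ S, t ≠ t0 →
        (edgeTrade v a b t.1 t.2.1 B + edgeTrade v a b t.2.1 t.2.2 B +
          edgeTrade v a b t.2.2 t.1 B = 0) ∧
        (uEdge v a b t.1 t.2.1 B + uEdge v a b t.2.1 t.2.2 B + uEdge v a b t.2.2 t.1 B = 0) := by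
      intro t htS htne
      obtain ⟨h12, h13, h23⟩ := hSdist t htS
      obtain ⟨he, hu⟩ := heval t h12 h13 h23
      have hnm : ¬((i = t.1 ∨ i = t.2.1 ∨ i = t.2.2) ∧ (j = t.1 ∨ j = t.2.1 ∨ j = t.2.2)) :=
        fun hc => htne (huniq t ⟨htS, hc⟩)
      rw [he, hu]
      exact block_val_notmem hij h12 h13 h23 hnm
    obtain ⟨h120, h130, h230⟩ := hSdist t0 ht0S
    obtain ⟨he0, hu0⟩ := heval t0 h120 h130 h230
    have hbv := block_val_mem hij h120 h130 h230 hmem0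
    constructor
    · rw [Finset.sum_eq_single_of_mem t0 ht0S (fun t ht htne => (hzero t ht htne).1), he0]
      exact hbv.1
    · rw [Finset.sum_eq_single_of_mem t0 ht0S (fun t ht htne => (hzero t ht htne).2), hu0]
      exact hbv.2
  · left
    have hne : ∀ u w : Fin m, u ≠ w → B ≠ {a u, b u, a w} ∧ B ≠ {a u, b u, b w} := by
      intro u w huw
      constructor <;> intro hc <;> exact hB ⟨u, w, huw, by tauto⟩
    constructor <;> apply Finset.sum_eq_zero <;> intro t htS <;>
      obtain ⟨h12, h13, h23⟩ := hSdist t htS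
    · exact (term_zero ha hb h12 h13 h23 B hne).1
    · exact (term_zero ha hb h12 h13 h23 B hne).2

/-- The pair sum of the four subset-indicators. -/
lemma pair_sum {i j : Fin m} (hij : i ≠ j) (P : Finset (Fin v)) (hP : P.card = 2) :
    (if P ⊆ ({a i, b i, a j} : Finset (Fin v)) then (1:ℤ) else 0) +
      (if P ⊆ ({a i, b i, b j} : Finset (Fin v)) then 1 else 0) -
      (if P ⊆ ({a j, b j, a i} : Finset (Fin v)) then 1 else 0) -
      (if P ⊆ ({a j, b j, b i} : Finset (Fin v)) then 1 else 0) =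
    2 * (if P = {a i, b i} then 1 else 0) - 2 * (if P = {a j, b j} then 1 else 0) := by
  have nab : ∀ x y : Fin m, ¬ (a x = b y) := fun x y => ab_ne ha hb x y
  have nba : ∀ x y : Fin m, ¬ (b x = a y) := fun x y h => ab_ne ha hb y x h.symm
  have naa : ¬ (a i = a j) := fun h => hij (a_inj ha hb h)
  have naa' : ¬ (a j = a i) := fun h => hij (a_inj ha hb h.symm)
  have nbb : ¬ (b i = b j) := fun h => hij (b_inj ha hb h)
  have nbb' : ¬ (b j = b i) := fun h => hij (b_inj ha hb h.symm)
  by_cases h1 : P ⊆ ({a i, b i, a j} : Finset (Fin v))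
  · rcases (subset_triple_iff hP).mp h1 with rfl|rfl|rfl <;>
      simp [Finset.insert_subset_iff, pair_eq' (nab i i), pair_eq' (nab j j),
        nab, nba, naa, naa', nbb, nbb']
  · by_cases h2 : P ⊆ ({a i, b i, b j} : Finset (Fin v))
    · rcases (subset_triple_iff hP).mp h2 with rfl|rfl|rfl
      · exact absurd (by simp [Finset.insert_subset_iff]) h1
      · simp [h1, Finset.insert_subset_iff, pair_eq' (nab i i), pair_eq' (nab j j),
          nab, nba, naa, naa', nbb, nbb']
      · simp [h1, Finset.insert_subset_iff, pair_eq' (nab i i), pair_eq' (nab j j),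
          nab, nba, naa, naa', nbb, nbb']
    · by_cases h3 : P ⊆ ({a j, b j, a i} : Finset (Fin v))
      · rcases (subset_triple_iff hP).mp h3 with rfl|rfl|rfl
        · simp [h1, h2, Finset.insert_subset_iff, pair_eq' (nab i i), pair_eq' (nab j j),
            nab, nba, naa, naa', nbb, nbb']
        · exact absurd (by simp [Finset.insert_subset_iff]) h1
        · exact absurd (by simp [Finset.insert_subset_iff]) h2
      · by_cases h4 : P ⊆ ({a j, b j, b i} : Finset (Fin v))
        · rcases (subset_triple_iff hP).mp h4 with rfl|rfl|rfl
          · exact absurd (by simp [Finset.insert_subset_iff]) h3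
          · exact absurd (by simp [Finset.insert_subset_iff]) h1
          · exact absurd (by simp [Finset.insert_subset_iff]) h2
        · have e1 : P ≠ {a i, b i} := fun h => h1 (by rw [h]; simp [Finset.insert_subset_iff])
          have e2 : P ≠ {a j, b j} := fun h => h3 (by rw [h]; simp [Finset.insert_subset_iff])
          simp [h1, h2, h3, h4, e1, e2]

/-- Pair sum of a single edge trade over all 3-sets containing `P`. -/
lemma edge_pair_sum {i j : Fin m} (hij : i ≠ j) (P : Finset (Fin v)) (hP : P.card = 2) :
    ∑ B ∈ Finset.univ.filter (fun B : Finset (Fin v) => B.card = 3 ∧ P ⊆ B),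
      edgeTrade v a b i j B =
    2 * (if P = {a i, b i} then 1 else 0) - 2 * (if P = {a j, b j} then 1 else 0) := by
  simp only [edgeTrade]
  rw [Finset.sum_sub_distrib, Finset.sum_sub_distrib, Finset.sum_add_distrib,
    Finset.sum_ite_eq' _ ({a i, b i, a j} : Finset (Fin v)),
    Finset.sum_ite_eq' _ ({a i, b i, b j} : Finset (Fin v)),
    Finset.sum_ite_eq' _ ({a j, b j, a i} : Finset (Fin v)),
    Finset.sum_ite_eq' _ ({a j, b j, b i} : Finset (Fin v))]
  simp only [Finset.mem_filter, Finset.mem_univ, true_and, card_aa ha hb hij,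
    card_ab ha hb hij, card_aa ha hb hij.symm, card_ab ha hb hij.symm, true_and]
  rw [← pair_sum ha hb hij P hP]

end

lemma sum_edge_univ (x y : Fin m) : ∑ B : Finset (Fin v), edgeTrade v a b x y B = 0 := by
  simp [edgeTrade, Finset.sum_sub_distrib, Finset.sum_add_distrib, Fintype.sum_ite_eq']

lemma sum_uedge_univ (x y : Fin m) : ∑ B : Finset (Fin v), uEdge v a b x y B = 4 := by
  simp [uEdge, Finset.sum_add_distrib, Fintype.sum_ite_eq']

/-- Double counting: each block covers 3 pairs, each pair lies in exactly one block. -/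
lemma count_S (S : Finset (Fin m × Fin m × Fin m))
    (hSdist : ∀ t ∈ S, t.1 ≠ t.2.1 ∧ t.1 ≠ t.2.2 ∧ t.2.1 ≠ t.2.2)
    (hSsts : ∀ x y : Fin m, x ≠ y → ∃! t, t ∈ S ∧
      (x = t.1 ∨ x = t.2.1 ∨ x = t.2.2) ∧ (y = t.1 ∨ y = t.2.1 ∨ y = t.2.2)) :
    3 * S.card = Nat.choose m 2 := by
  have key : ∑ t ∈ S, (3 : ℕ) =
      ∑ t ∈ S, ∑ p ∈ (Finset.univ : Finset (Fin m)).powersetCard 2,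
        (if p ⊆ {t.1, t.2.1, t.2.2} then 1 else 0) := by
    refine Finset.sum_congr rfl fun t htS => ?_
    obtain ⟨h12, h13, h23⟩ := hSdist t htS
    rw [Finset.sum_boole]
    have hfil : ((Finset.univ : Finset (Fin m)).powersetCard 2).filter
        (fun p => p ⊆ {t.1, t.2.1, t.2.2}) =
        ({t.1, t.2.1, t.2.2} : Finset (Fin m)).powersetCard 2 := by
      ext p
      simp [Finset.mem_powersetCard, Finset.mem_filter, and_comm]
    have hc : ({t.1, t.2.1, t.2.2} : Finset (Fin m)).card = 3 :=
      Finset.card_eq_three.mpr ⟨t.1, t.2.1, t.2.2, h12, h13, h23, rfl⟩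
    rw [hfil, Finset.card_powersetCard, hc]
    rfl
  rw [Finset.sum_comm] at key
  have key2 : ∀ p ∈ (Finset.univ : Finset (Fin m)).powersetCard 2,
      ∑ t ∈ S, (if p ⊆ {t.1, t.2.1, t.2.2} then (1:ℕ) else 0) = 1 := by
    intro p hp
    rw [Finset.mem_powersetCard] at hp
    obtain ⟨x, y, hxy, rfl⟩ := Finset.card_eq_two.mp hp.2
    obtain ⟨t0, ⟨ht0S, hmem0⟩, huniq⟩ := hSsts x y hxy
    rw [Finset.sum_eq_single_of_mem t0 ht0S]
    · rw [if_pos]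
      simp only [Finset.insert_subset_iff, Finset.singleton_subset_iff, Finset.mem_insert,
        Finset.mem_singleton]
      exact hmem0
    · intro t htS htne
      rw [if_neg]
      intro hc
      simp only [Finset.insert_subset_iff, Finset.singleton_subset_iff, Finset.mem_insert,
        Finset.mem_singleton] at hc
      exact htne (huniq t ⟨htS, hc⟩)
  rw [Finset.sum_congr rfl key2] at key
  simp only [Finset.sum_const, smul_eq_mul, mul_one, Finset.card_powersetCard,
    Finset.card_univ, Fintype.card_fin] at key
  omega

end StsTrade

/-- For `n ≥ 1`, `v = 4n+2`, `m = 2n+1`, `aᵢ = i`, `bᵢ = i + m`, and an oriented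
Steiner triple system `S` on `{0,…,2n}`, the sum `h₁` over the oriented blocks of `S` of the
directed-edge trades along their three directed edges is a simple `T(2,3,4n+2)` trade of
volume `2·C(2n+1,2) = 2n(2n+1)`. -/
theorem sts_cycle_trade
    (n : ℕ) (hn : 1 ≤ n) (v m : ℕ) (hv : v = 4 * n + 2) (hm : m = 2 * n + 1)
    (a b : Fin m → Fin v)
    (ha : ∀ i : Fin m, (a i : ℕ) = (i : ℕ)) (hb : ∀ i : Fin m, (b i : ℕ) = (i : ℕ) + m)
    (S : Finset (Fin m × Fin m × Fin m))
    (hSdist : ∀ t ∈ S, t.1 ≠ t.2.1 ∧ t.1 ≠ t.2.2 ∧ t.2.1 ≠ t.2.2)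
    (hSsts : ∀ x y : Fin m, x ≠ y → ∃! t, t ∈ S ∧
      (x = t.1 ∨ x = t.2.1 ∨ x = t.2.2) ∧ (y = t.1 ∨ y = t.2.1 ∨ y = t.2.2))
    (h₁ : Finset (Fin v) → ℤ)
    (hh₁ : h₁ = fun B => ∑ t ∈ S,
      (edgeTrade v a b t.1 t.2.1 B + edgeTrade v a b t.2.1 t.2.2 B +
        edgeTrade v a b t.2.2 t.1 B)) :
    isTrade v h₁ ∧ isSimple v h₁ ∧ volume v h₁ = 2 * Nat.choose (2 * n + 1) 2 := by
  refine ⟨⟨?_, ?_⟩, ?_, ?_⟩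
  · -- support condition
    intro B hcard
    simp only [hh₁]
    apply Finset.sum_eq_zero
    intro t htS
    obtain ⟨h12, h13, h23⟩ := hSdist t htS
    have hne : ∀ u w : Fin m, u ≠ w → B ≠ {a u, b u, a w} ∧ B ≠ {a u, b u, b w} := by
      intro u w huw
      constructor <;> intro hc
      · exact hcard (by rw [hc]; exact StsTrade.card_aa ha hb huw)
      · exact hcard (by rw [hc]; exact StsTrade.card_ab ha hb huw)
    exact (StsTrade.term_zero ha hb h12 h13 h23 B hne).1
  · -- pair balance
    intro P hP
    simp only [hh₁]
    rw [Finset.sum_comm]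
    apply Finset.sum_eq_zero
    intro t htS
    obtain ⟨h12, h13, h23⟩ := hSdist t htS
    rw [Finset.sum_add_distrib, Finset.sum_add_distrib,
      StsTrade.edge_pair_sum ha hb h12 P hP, StsTrade.edge_pair_sum ha hb h23 P hP,
      StsTrade.edge_pair_sum ha hb h13.symm P hP]
    ring
  · -- simplicity
    intro B
    simp only [hh₁]
    rcases StsTrade.pointwise ha hb S hSdist hSsts B with ⟨h0, _⟩ | ⟨h1 | h1, _⟩
    · right; left; exact h0
    · right; right; exact h1
    · left; exact h1
  · -- volume
    have hsum0 : ∑ B : Finset (Fin v), h₁ B = 0 := by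
      simp only [hh₁]
      rw [Finset.sum_comm]
      apply Finset.sum_eq_zero
      intro t htS
      rw [Finset.sum_add_distrib, Finset.sum_add_distrib, StsTrade.sum_edge_univ,
        StsTrade.sum_edge_univ, StsTrade.sum_edge_univ]
      ring
    have habs : ∑ B : Finset (Fin v), |h₁ B| = 12 * S.card := by
      have hpt : ∀ B : Finset (Fin v), |h₁ B| = ∑ t ∈ S,
          (StsTrade.uEdge v a b t.1 t.2.1 B + StsTrade.uEdge v a b t.2.1 t.2.2 B +
            StsTrade.uEdge v a b t.2.2 t.1 B) := by
        intro B
        simp only [hh₁]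
        rcases StsTrade.pointwise ha hb S hSdist hSsts B with ⟨h0, hu⟩ | ⟨h1 | h1, hu⟩ <;>
          rw [hu]
        · rw [h0]; simp
        · rw [h1]; simp
        · rw [h1]; simp
      rw [Finset.sum_congr rfl (fun B _ => hpt B), Finset.sum_comm]
      have hterm : ∀ t ∈ S, (∑ B : Finset (Fin v),
          (StsTrade.uEdge v a b t.1 t.2.1 B + StsTrade.uEdge v a b t.2.1 t.2.2 B +
            StsTrade.uEdge v a b t.2.2 t.1 B)) = (12 : ℤ) := by
        intro t _
        rw [Finset.sum_add_distrib, Finset.sum_add_distrib, StsTrade.sum_uedge_univ,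
          StsTrade.sum_uedge_univ, StsTrade.sum_uedge_univ]
        norm_num
      rw [Finset.sum_congr rfl hterm, Finset.sum_const, nsmul_eq_mul]
      ring
    have hcount := StsTrade.count_S S hSdist hSsts
    have hmax : ∀ x : ℤ, 2 * max x 0 = x + |x| := by
      intro x
      rcases le_total x 0 with h | h
      · rw [max_eq_right h, abs_of_nonpos h]; ring
      · rw [max_eq_left h, abs_of_nonneg h]; ring
    have h2v : 2 * volume v h₁ = 12 * S.card := by
      show 2 * ∑ B : Finset (Fin v), max (h₁ B) 0 = 12 * S.card
      rw [Finset.mul_sum, Finset.sum_congr rfl (fun B _ => hmax (h₁ B)),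
        Finset.sum_add_distrib, hsum0, habs]
      ring
    have hch : (Nat.choose (2 * n + 1) 2 : ℤ) = 3 * S.card := by
      rw [← hm]
      exact_mod_cast hcount.symm
    linarith [h2v, hch]
end

section
/- Let n ≥ 2, v = 4n+2, m = 2n+1, and for i ∈ {0,...,2n} set a_i = i and b_i = i + m in Fin v. Let S' be a Steiner triple system on {0,...,2n-2} together with an orientation of its blocks, and let M be a partition of {0,...,2n-3} into (n-1) two-element subsets, each written as an ordered pair (i,j). Then h2 = [Σ over the oriented blocks of S' of the sum over the three directed edges (i,j) of that block of E(i,j)] + [E(2n-2, 2n-1) + E(2n-1, 2n) + E(2n, 2n-2)] + [Σ over the pairs (i,j) of M of (E(2n-1, i) + E(i, 2n) + E(2n, j) + E(j, 2n-1))] is a simple T(2,3,4n+2) trade of volume 2·C(2n+1,2) = 2n(2n+1). -/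
section Helpers

variable {m v : ℕ} {a b : Fin m → Fin v}

/-- The block `{a i, b i, a j}` (if `s = false`) or `{a i, b i, b j}` (if `s = true`). -/
def blkAB (a b : Fin m → Fin v) (i j : Fin m) (s : Bool) : Finset (Fin v) :=
  {a i, b i, if s then b j else a j}

lemma aInj (ha : ∀ i : Fin m, (a i : ℕ) = i) {i j : Fin m} (h : a i = a j) : i = j := by
  have := congrArg Fin.val h; rw [ha, ha] at this; exact Fin.ext this

lemma bInj (hb : ∀ i : Fin m, (b i : ℕ) = (i : ℕ) + m) {i j : Fin m} (h : b i = b j) : i = j := by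
  have := congrArg Fin.val h; rw [hb, hb] at this; exact Fin.ext (by omega)

lemma aNeB (ha : ∀ i : Fin m, (a i : ℕ) = i) (hb : ∀ i : Fin m, (b i : ℕ) = (i : ℕ) + m)
    (i j : Fin m) : a i ≠ b j := by
  intro h; have := congrArg Fin.val h; rw [ha, hb] at this; have := i.isLt; omega

lemma blk_card (ha : ∀ i : Fin m, (a i : ℕ) = i) (hb : ∀ i : Fin m, (b i : ℕ) = (i : ℕ) + m)
    {i j : Fin m} (hij : i ≠ j) (s : Bool) : (blkAB a b i j s).card = 3 := by
  have h1 : a i ≠ b i := aNeB ha hb i i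
  have h2 : a i ≠ (if s then b j else a j) := by
    cases s
    · simpa using fun h => hij (aInj ha h)
    · simpa using aNeB ha hb i j
  have h3 : b i ≠ (if s then b j else a j) := by
    cases s
    · simpa using (aNeB ha hb j i).symm
    · simpa using fun h => hij (bInj hb h)
  rw [blkAB, Finset.card_insert_of_notMem (by simp [h1, h2]),
    Finset.card_insert_of_notMem (by simp [h3]), Finset.card_singleton]

lemma blk_inj (ha : ∀ i : Fin m, (a i : ℕ) = i) (hb : ∀ i : Fin m, (b i : ℕ) = (i : ℕ) + m)
    {i j k l : Fin m} {s t : Bool} (hij : i ≠ j) (hkl : k ≠ l)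
    (h : blkAB a b i j s = blkAB a b k l t) : i = k ∧ j = l ∧ s = t := by
  have hne : ∀ x y : Fin m, a x ≠ b y := aNeB ha hb
  cases s <;> cases t <;> simp only [blkAB, if_true, if_false, Bool.false_eq_true] at h
  · -- {a i, b i, a j} = {a k, b k, a l}
    have hbk : b k ∈ ({a i, b i, a j} : Finset (Fin v)) := by rw [h]; simp
    simp only [Finset.mem_insert, Finset.mem_singleton] at hbk
    rcases hbk with h1 | h1 | h1
    · exact absurd h1.symm (hne i k)
    · have hki : k = i := bInj hb h1
      have hal : a l ∈ ({a i, b i, a j} : Finset (Fin v)) := by rw [h]; simp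
      simp only [Finset.mem_insert, Finset.mem_singleton] at hal
      rcases hal with h2 | h2 | h2
      · exact absurd (aInj ha h2 ▸ hkl) (by simp [hki])
      · exact absurd h2 (hne l i)
      · exact ⟨hki.symm, (aInj ha h2).symm, rfl⟩
    · exact absurd h1.symm (hne j k)
  · -- {a i, b i, a j} = {a k, b k, b l}
    exfalso
    have hbk : b k ∈ ({a i, b i, a j} : Finset (Fin v)) := by rw [h]; simp
    have hbl : b l ∈ ({a i, b i, a j} : Finset (Fin v)) := by rw [h]; simp
    simp only [Finset.mem_insert, Finset.mem_singleton] at hbk hbl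
    rcases hbk with h1 | h1 | h1
    · exact absurd h1.symm (hne i k)
    · rcases hbl with h2 | h2 | h2
      · exact absurd h2.symm (hne i l)
      · exact hkl (bInj hb (h1.trans h2.symm))
      · exact absurd h2.symm (hne j l)
    · exact absurd h1.symm (hne j k)
  · -- {a i, b i, b j} = {a k, b k, a l}
    exfalso
    have hbi : b i ∈ ({a k, b k, a l} : Finset (Fin v)) := by rw [← h]; simp
    have hbj : b j ∈ ({a k, b k, a l} : Finset (Fin v)) := by rw [← h]; simp
    simp only [Finset.mem_insert, Finset.mem_singleton] at hbi hbj
    rcases hbi with h1 | h1 | h1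
    · exact absurd h1.symm (hne k i)
    · rcases hbj with h2 | h2 | h2
      · exact absurd h2.symm (hne k j)
      · exact hij (bInj hb (h1.trans h2.symm))
      · exact absurd h2.symm (hne l j)
    · exact absurd h1.symm (hne l i)
  · -- {a i, b i, b j} = {a k, b k, b l}
    have hak : a k ∈ ({a i, b i, b j} : Finset (Fin v)) := by rw [h]; simp
    simp only [Finset.mem_insert, Finset.mem_singleton] at hak
    rcases hak with h1 | h1 | h1
    · have hki : k = i := aInj ha h1
      have hbl : b l ∈ ({a i, b i, b j} : Finset (Fin v)) := by rw [h]; simp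
      simp only [Finset.mem_insert, Finset.mem_singleton] at hbl
      rcases hbl with h2 | h2 | h2
      · exact absurd h2.symm (hne i l)
      · exact absurd ((bInj hb h2) ▸ hkl) (by simp [hki])
      · exact ⟨hki.symm, (bInj hb h2).symm, rfl⟩
    · exact absurd h1 (hne k i)
    · exact absurd h1 (hne k j)




variable {α : Type*} [DecidableEq α]

lemma pair_eq_pair_imp {u v w x : α} (h : ({u, v} : Finset α) = {w, x}) :
    (u = w ∧ v = x) ∨ (u = x ∧ v = w) := by
  have hu : u ∈ ({w, x} : Finset α) := by rw [← h]; simp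
  have hv : v ∈ ({w, x} : Finset α) := by rw [← h]; simp
  have hw : w ∈ ({u, v} : Finset α) := by rw [h]; simp
  have hx : x ∈ ({u, v} : Finset α) := by rw [h]; simp
  simp only [Finset.mem_insert, Finset.mem_singleton] at hu hv hw hx
  tauto

lemma subset_triple_ite {u v w : α} (huv : u ≠ v) (huw : u ≠ w) (hvw : v ≠ w)
    {P : Finset α} (hP : P.card = 2) :
    (if P ⊆ ({u, v, w} : Finset α) then (1 : ℤ) else 0) =
      (if P = {u, v} then 1 else 0) + (if P = {u, w} then 1 else 0) +
      (if P = {v, w} then 1 else 0) := by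
  obtain ⟨x, y, hxy, rfl⟩ := Finset.card_eq_two.mp hP
  have hsub : ({x, y} : Finset α) ⊆ {u, v, w} ↔
      ({x,y} : Finset α) = {u,v} ∨ ({x,y} : Finset α) = {u,w} ∨ ({x,y} : Finset α) = {v,w} := by
    constructor
    · intro hs
      have hxm : x ∈ ({u, v, w} : Finset α) := hs (by simp)
      have hym : y ∈ ({u, v, w} : Finset α) := hs (by simp)
      simp only [Finset.mem_insert, Finset.mem_singleton] at hxm hym
      have pc : ∀ p q : α, ({p, q} : Finset α) = {q, p} := fun p q => Finset.pair_comm p q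
      rcases hxm with rfl | rfl | rfl <;> rcases hym with rfl | rfl | rfl <;>
        first
          | exact absurd rfl hxy
          | tauto
          | (rw [pc]; tauto)
    · intro hs
      rcases hs with h | h | h <;> rw [h] <;> intro z hz <;>
        simp only [Finset.mem_insert, Finset.mem_singleton] at hz ⊢ <;> tauto
  have d1 : ({u,v} : Finset α) ≠ {u,w} := by
    intro h; rcases pair_eq_pair_imp h with ⟨_, h2⟩ | ⟨h1, h2⟩
    · exact hvw h2
    · exact huw h1
  have d2 : ({u,v} : Finset α) ≠ {v,w} := by
    intro h; rcases pair_eq_pair_imp h with ⟨h1, h2⟩ | ⟨h1, h2⟩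
    · exact huv h1
    · exact huw h1
  have d3 : ({u,w} : Finset α) ≠ {v,w} := by
    intro h; rcases pair_eq_pair_imp h with ⟨h1, h2⟩ | ⟨h1, h2⟩
    · exact huv h1
    · exact hvw h2.symm
  simp only [hsub]
  split_ifs with g1 g2 g3 g2 g3 g3 <;> simp_all <;> tauto



lemma ite_add_ite_or {P Q : Prop} [Decidable P] [Decidable Q] (h : ¬(P ∧ Q)) :
    (if P then (1 : ℤ) else 0) + (if Q then 1 else 0) = if P ∨ Q then 1 else 0 := by
  split_ifs <;> simp_all

variable {m v : ℕ} {a b : Fin m → Fin v}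

lemma edgeTrade_card_ne (ha : ∀ i : Fin m, (a i : ℕ) = i)
    (hb : ∀ i : Fin m, (b i : ℕ) = (i : ℕ) + m) {i j : Fin m} (hij : i ≠ j)
    {B : Finset (Fin v)} (hB : B.card ≠ 3) : edgeTrade v a b i j B = 0 := by
  have c1 : ({a i, b i, a j} : Finset (Fin v)).card = 3 := blk_card ha hb hij false
  have c2 : ({a i, b i, b j} : Finset (Fin v)).card = 3 := blk_card ha hb hij true
  have c3 : ({a j, b j, a i} : Finset (Fin v)).card = 3 := blk_card ha hb (Ne.symm hij) false
  have c4 : ({a j, b j, b i} : Finset (Fin v)).card = 3 := blk_card ha hb (Ne.symm hij) true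
  have n1 : B ≠ {a i, b i, a j} := fun h => hB (h ▸ c1)
  have n2 : B ≠ {a i, b i, b j} := fun h => hB (h ▸ c2)
  have n3 : B ≠ {a j, b j, a i} := fun h => hB (h ▸ c3)
  have n4 : B ≠ {a j, b j, b i} := fun h => hB (h ▸ c4)
  simp [edgeTrade, n1, n2, n3, n4]

lemma edgeTrade_pairSum (ha : ∀ i : Fin m, (a i : ℕ) = i)
    (hb : ∀ i : Fin m, (b i : ℕ) = (i : ℕ) + m) {i j : Fin m} (hij : i ≠ j)
    {P : Finset (Fin v)} (hP : P.card = 2) :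
    ∑ B ∈ Finset.univ.filter (fun B : Finset (Fin v) => B.card = 3 ∧ P ⊆ B),
      edgeTrade v a b i j B =
    2 * (if P = {a i, b i} then 1 else 0) - 2 * (if P = {a j, b j} then 1 else 0) := by
  have c1 : ({a i, b i, a j} : Finset (Fin v)).card = 3 := blk_card ha hb hij false
  have c2 : ({a i, b i, b j} : Finset (Fin v)).card = 3 := blk_card ha hb hij true
  have c3 : ({a j, b j, a i} : Finset (Fin v)).card = 3 := blk_card ha hb (Ne.symm hij) false
  have c4 : ({a j, b j, b i} : Finset (Fin v)).card = 3 := blk_card ha hb (Ne.symm hij) true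
  have hab : ∀ x y : Fin m, a x ≠ b y := aNeB ha hb
  have haa : ∀ x y : Fin m, x ≠ y → a x ≠ a y := fun x y hxy h => hxy (aInj ha h)
  have hbb : ∀ x y : Fin m, x ≠ y → b x ≠ b y := fun x y hxy h => hxy (bInj hb h)
  simp only [edgeTrade, Finset.sum_sub_distrib, Finset.sum_add_distrib,
    Finset.sum_ite_eq', Finset.mem_filter, Finset.mem_univ, true_and, c1, c2, c3, c4]
  norm_num
  rw [subset_triple_ite (hab i i) (haa i j hij) (hab j i).symm hP,
    subset_triple_ite (hab i i) (hab i j) (hbb i j hij) hP,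
    subset_triple_ite (hab j j) (haa j i (Ne.symm hij)) (hab i j).symm hP,
    subset_triple_ite (hab j j) (hab j i) (hbb j i (Ne.symm hij)) hP,
    Finset.pair_comm (a j) (a i), Finset.pair_comm (b j) (a i),
    Finset.pair_comm (a j) (b i), Finset.pair_comm (b j) (b i)]
  split_ifs <;> ring

lemma edgeTrade_eq_blk (ha : ∀ i : Fin m, (a i : ℕ) = i)
    (hb : ∀ i : Fin m, (b i : ℕ) = (i : ℕ) + m) {i j : Fin m} (hij : i ≠ j)
    (B : Finset (Fin v)) : edgeTrade v a b i j B =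
      (if B = blkAB a b i j false ∨ B = blkAB a b i j true then 1 else 0) -
      (if B = blkAB a b j i false ∨ B = blkAB a b j i true then 1 else 0) := by
  have h1 : ¬(B = blkAB a b i j false ∧ B = blkAB a b i j true) := by
    rintro ⟨e1, e2⟩
    exact absurd (blk_inj ha hb hij hij (e1.symm.trans e2)).2.2 (by simp)
  have h2 : ¬(B = blkAB a b j i false ∧ B = blkAB a b j i true) := by
    rintro ⟨e1, e2⟩
    exact absurd (blk_inj ha hb (Ne.symm hij) (Ne.symm hij) (e1.symm.trans e2)).2.2 (by simp)
  rw [show edgeTrade v a b i j B =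
      ((if B = blkAB a b i j false then (1:ℤ) else 0) + (if B = blkAB a b i j true then 1 else 0)) -
      ((if B = blkAB a b j i false then (1:ℤ) else 0) + (if B = blkAB a b j i true then 1 else 0))
    from by simp only [blkAB, if_true, if_false, Bool.false_eq_true]; rw [edgeTrade]; ring,
    ite_add_ite_or h1, ite_add_ite_or h2]

lemma edgeTrade_pos_neg_excl (ha : ∀ i : Fin m, (a i : ℕ) = i)
    (hb : ∀ i : Fin m, (b i : ℕ) = (i : ℕ) + m) {i j : Fin m} (hij : i ≠ j)
    {B : Finset (Fin v)}
    (hpos : B = blkAB a b i j false ∨ B = blkAB a b i j true)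
    (hneg : B = blkAB a b j i false ∨ B = blkAB a b j i true) : False := by
  rcases hpos with e1 | e1 <;> rcases hneg with e2 | e2 <;>
    exact hij (blk_inj ha hb hij (Ne.symm hij) (e1.symm.trans e2)).1

lemma edgeTrade_max (ha : ∀ i : Fin m, (a i : ℕ) = i)
    (hb : ∀ i : Fin m, (b i : ℕ) = (i : ℕ) + m) {i j : Fin m} (hij : i ≠ j)
    (B : Finset (Fin v)) : max (edgeTrade v a b i j B) 0 =
      if B = blkAB a b i j false ∨ B = blkAB a b i j true then 1 else 0 := by
  rw [edgeTrade_eq_blk ha hb hij]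
  by_cases hpos : B = blkAB a b i j false ∨ B = blkAB a b i j true
  · have hneg : ¬(B = blkAB a b j i false ∨ B = blkAB a b j i true) :=
      fun h => edgeTrade_pos_neg_excl ha hb hij hpos h
    simp [hpos, hneg]
  · simp only [hpos, if_false]
    split_ifs <;> norm_num

lemma edgeTrade_simple (ha : ∀ i : Fin m, (a i : ℕ) = i)
    (hb : ∀ i : Fin m, (b i : ℕ) = (i : ℕ) + m) {i j : Fin m} (hij : i ≠ j)
    (B : Finset (Fin v)) :
    edgeTrade v a b i j B = -1 ∨ edgeTrade v a b i j B = 0 ∨ edgeTrade v a b i j B = 1 := by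
  rw [edgeTrade_eq_blk ha hb hij]
  split_ifs <;> norm_num

lemma edgeTrade_ne_zero (ha : ∀ i : Fin m, (a i : ℕ) = i)
    (hb : ∀ i : Fin m, (b i : ℕ) = (i : ℕ) + m) {i j : Fin m} (hij : i ≠ j)
    {B : Finset (Fin v)} (h : edgeTrade v a b i j B ≠ 0) :
    (B = blkAB a b i j false ∨ B = blkAB a b i j true) ∨
    (B = blkAB a b j i false ∨ B = blkAB a b j i true) := by
  by_contra hc
  push_neg at hc
  rw [edgeTrade_eq_blk ha hb hij] at h
  simp only [if_neg (by tauto : ¬(B = blkAB a b i j false ∨ B = blkAB a b i j true)),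
    if_neg (by tauto : ¬(B = blkAB a b j i false ∨ B = blkAB a b j i true))] at h
  exact h (by ring)

section SmallSums
variable {α : Type*} {β : Type*} [DecidableEq α] [AddCommMonoid β]

lemma sum_trip {x y z : α} (h1 : x ≠ y) (h2 : x ≠ z) (h3 : y ≠ z) (f : α → β) :
    ∑ q ∈ ({x, y, z} : Finset α), f q = f x + f y + f z := by
  rw [Finset.sum_insert (by simp [h1, h2]), Finset.sum_insert (by simp [h3]),
    Finset.sum_singleton, add_assoc]

lemma sum_quad {w x y z : α} (h1 : w ≠ x) (h2 : w ≠ y) (h3 : w ≠ z) (h4 : x ≠ y)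
    (h5 : x ≠ z) (h6 : y ≠ z) (f : α → β) :
    ∑ q ∈ ({w, x, y, z} : Finset α), f q = f w + f x + f y + f z := by
  rw [Finset.sum_insert (by simp [h1, h2, h3]), Finset.sum_insert (by simp [h4, h5]),
    Finset.sum_insert (by simp [h6]), Finset.sum_singleton, add_assoc, add_assoc]

lemma card_trip {x y z : α} (h1 : x ≠ y) (h2 : x ≠ z) (h3 : y ≠ z) :
    ({x, y, z} : Finset α).card = 3 := by
  rw [Finset.card_insert_of_notMem (by simp [h1, h2]),
    Finset.card_insert_of_notMem (by simp [h3]), Finset.card_singleton]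

lemma card_quad {w x y z : α} (h1 : w ≠ x) (h2 : w ≠ y) (h3 : w ≠ z) (h4 : x ≠ y)
    (h5 : x ≠ z) (h6 : y ≠ z) : ({w, x, y, z} : Finset α).card = 4 := by
  rw [Finset.card_insert_of_notMem (by simp [h1, h2, h3]),
    Finset.card_insert_of_notMem (by simp [h4, h5]),
    Finset.card_insert_of_notMem (by simp [h6]), Finset.card_singleton]

end SmallSums

set_option maxHeartbeats 4000000 in
/-- For `n ≥ 2`, `v = 4n+2`, `m = 2n+1`, `aᵢ = i`, `bᵢ = i + m`, an oriented
Steiner triple system `S'` on `{0,…,2n-2}` and a perfect matching `M` on `{0,…,2n-3}` into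
`n-1` ordered pairs, the trade `h₂` (block cycle trades of `S'`, plus the triangle
`E(2n-2,2n-1) + E(2n-1,2n) + E(2n,2n-2)`, plus for each pair `(i,j)` of `M` the 4-cycle
`E(2n-1,i) + E(i,2n) + E(2n,j) + E(j,2n-1)`) is a simple `T(2,3,4n+2)` trade of volume
`2·C(2n+1,2) = 2n(2n+1)`. -/
theorem sts_matching_cycle_trade
    (n : ℕ) (hn : 2 ≤ n) (v m : ℕ) (hv : v = 4 * n + 2) (hm : m = 2 * n + 1)
    (a b : Fin m → Fin v)
    (ha : ∀ i : Fin m, (a i : ℕ) = (i : ℕ)) (hb : ∀ i : Fin m, (b i : ℕ) = (i : ℕ) + m)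
    (S : Finset (Fin m × Fin m × Fin m))
    (hSdist : ∀ t ∈ S, t.1 ≠ t.2.1 ∧ t.1 ≠ t.2.2 ∧ t.2.1 ≠ t.2.2)
    (hSsub : ∀ t ∈ S, (t.1 : ℕ) < 2 * n - 1 ∧ (t.2.1 : ℕ) < 2 * n - 1 ∧ (t.2.2 : ℕ) < 2 * n - 1)
    (hSsts : ∀ x y : Fin m, (x : ℕ) < 2 * n - 1 → (y : ℕ) < 2 * n - 1 → x ≠ y → ∃! t, t ∈ S ∧
      (x = t.1 ∨ x = t.2.1 ∨ x = t.2.2) ∧ (y = t.1 ∨ y = t.2.1 ∨ y = t.2.2))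
    (M : Finset (Fin m × Fin m))
    (hMdist : ∀ p ∈ M, p.1 ≠ p.2 ∧ (p.1 : ℕ) < 2 * n - 2 ∧ (p.2 : ℕ) < 2 * n - 2)
    (hMcover : ∀ x : Fin m, (x : ℕ) < 2 * n - 2 → ∃! p, p ∈ M ∧ (x = p.1 ∨ x = p.2))
    (hMcard : M.card = n - 1)
    (c d e : Fin m) (hc : (c : ℕ) = 2 * n - 2) (hd : (d : ℕ) = 2 * n - 1) (he : (e : ℕ) = 2 * n)
    (h₂ : Finset (Fin v) → ℤ)
    (hh₂ : h₂ = fun B =>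
      (∑ t ∈ S, (edgeTrade v a b t.1 t.2.1 B + edgeTrade v a b t.2.1 t.2.2 B +
        edgeTrade v a b t.2.2 t.1 B)) +
      (edgeTrade v a b c d B + edgeTrade v a b d e B + edgeTrade v a b e c B) +
      ∑ p ∈ M, (edgeTrade v a b d p.1 B + edgeTrade v a b p.1 e B +
        edgeTrade v a b e p.2 B + edgeTrade v a b p.2 d B)) :
    isTrade v h₂ ∧ isSimple v h₂ ∧ volume v h₂ = 2 * Nat.choose (2 * n + 1) 2 := by
  classical
  subst hh₂
  -- basic distinctness facts
  have fne : ∀ x y : Fin m, (x : ℕ) ≠ (y : ℕ) → x ≠ y := fun x y h hx => h (congrArg Fin.val hx)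
  have hcd : c ≠ d := fne c d (by omega)
  have hde : d ≠ e := fne d e (by omega)
  have hec : e ≠ c := fne e c (by omega)
  have hMd : ∀ p ∈ M, d ≠ p.1 ∧ p.1 ≠ e ∧ e ≠ p.2 ∧ p.2 ≠ d := by
    intro p hp
    obtain ⟨h1, h2, h3⟩ := hMdist p hp
    exact ⟨fne d p.1 (by omega), fne p.1 e (by omega), fne e p.2 (by omega),
      fne p.2 d (by omega)⟩
  -- the finset of directed edges
  set E1 : Finset (Fin m × Fin m) :=
    S.biUnion (fun t => {(t.1, t.2.1), (t.2.1, t.2.2), (t.2.2, t.1)}) with hE1def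
  set E2 : Finset (Fin m × Fin m) := {(c, d), (d, e), (e, c)} with hE2def
  set E3 : Finset (Fin m × Fin m) :=
    M.biUnion (fun p => {(d, p.1), (p.1, e), (e, p.2), (p.2, d)}) with hE3def
  set Ed : Finset (Fin m × Fin m) := E1 ∪ E2 ∪ E3 with hEddef
  -- uniqueness consequences
  have hSuniq : ∀ t ∈ S, ∀ t' ∈ S, ∀ x y : Fin m, x ≠ y →
      (x = t.1 ∨ x = t.2.1 ∨ x = t.2.2) → (y = t.1 ∨ y = t.2.1 ∨ y = t.2.2) →
      (x = t'.1 ∨ x = t'.2.1 ∨ x = t'.2.2) → (y = t'.1 ∨ y = t'.2.1 ∨ y = t'.2.2) →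
      t = t' := by
    intro t ht t' ht' x y hxy hx hy hx' hy'
    have hxv : (x : ℕ) < 2 * n - 1 := by
      obtain ⟨s1, s2, s3⟩ := hSsub t ht
      rcases hx with rfl | rfl | rfl <;> assumption
    have hyv : (y : ℕ) < 2 * n - 1 := by
      obtain ⟨s1, s2, s3⟩ := hSsub t ht
      rcases hy with rfl | rfl | rfl <;> assumption
    exact (hSsts x y hxv hyv hxy).unique ⟨ht, hx, hy⟩ ⟨ht', hx', hy'⟩
  have hMuniq : ∀ p ∈ M, ∀ p' ∈ M, ∀ x : Fin m,
      (x = p.1 ∨ x = p.2) → (x = p'.1 ∨ x = p'.2) → p = p' := by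
    intro p hp p' hp' x hx hx'
    have hxv : (x : ℕ) < 2 * n - 2 := by
      obtain ⟨_, s2, s3⟩ := hMdist p hp
      rcases hx with rfl | rfl <;> assumption
    exact (hMcover x hxv).unique ⟨hp, hx⟩ ⟨hp', hx'⟩
  -- membership characterizations
  have hmem1 : ∀ q : Fin m × Fin m, q ∈ E1 ↔ ∃ t ∈ S,
      q = (t.1, t.2.1) ∨ q = (t.2.1, t.2.2) ∨ q = (t.2.2, t.1) := by
    intro q; simp [hE1def, Finset.mem_biUnion]
  have hmem3 : ∀ q : Fin m × Fin m, q ∈ E3 ↔ ∃ p ∈ M,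
      q = (d, p.1) ∨ q = (p.1, e) ∨ q = (e, p.2) ∨ q = (p.2, d) := by
    intro q; simp [hE3def, Finset.mem_biUnion]
  -- coordinate bounds per part
  have hq1 : ∀ q ∈ E1, q.1 ≠ q.2 ∧ (q.1 : ℕ) < 2 * n - 1 ∧ (q.2 : ℕ) < 2 * n - 1 := by
    intro q hq
    obtain ⟨t, ht, hcase⟩ := (hmem1 q).mp hq
    obtain ⟨d1, d2, d3⟩ := hSdist t ht
    obtain ⟨s1, s2, s3⟩ := hSsub t ht
    rcases hcase with rfl | rfl | rfl
    · exact ⟨d1, s1, s2⟩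
    · exact ⟨d3, s2, s3⟩
    · exact ⟨Ne.symm d2, s3, s1⟩
  have hq2 : ∀ q ∈ E2, ((q.1 : ℕ) ≥ 2 * n - 1 ∨ (q.2 : ℕ) ≥ 2 * n - 1) ∧
      (q.1 : ℕ) ≥ 2 * n - 2 ∧ (q.2 : ℕ) ≥ 2 * n - 2 := by
    intro q hq
    simp only [hE2def, Finset.mem_insert, Finset.mem_singleton] at hq
    rcases hq with rfl | rfl | rfl <;> simp <;> omega
  have hq3 : ∀ q ∈ E3, ((q.1 : ℕ) ≥ 2 * n - 1 ∨ (q.2 : ℕ) ≥ 2 * n - 1) ∧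
      ((q.1 : ℕ) < 2 * n - 2 ∨ (q.2 : ℕ) < 2 * n - 2) := by
    intro q hq
    obtain ⟨p, hp, hcase⟩ := (hmem3 q).mp hq
    obtain ⟨h1, h2, h3⟩ := hMdist p hp
    rcases hcase with rfl | rfl | rfl | rfl <;> simp <;> omega
  have hEdne : ∀ q ∈ Ed, q.1 ≠ q.2 := by
    intro q hq
    rw [hEddef, Finset.mem_union, Finset.mem_union] at hq
    rcases hq with (hq | hq) | hq
    · exact (hq1 q hq).1
    · simp only [hE2def, Finset.mem_insert, Finset.mem_singleton] at hq
      rcases hq with rfl | rfl | rfl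
      exacts [hcd, hde, hec]
    · obtain ⟨p, hp, hcase⟩ := (hmem3 q).mp hq
      obtain ⟨m1, m2, m3, m4⟩ := hMd p hp
      rcases hcase with rfl | rfl | rfl | rfl <;> assumption
    -- pairwise disjointness of block edge sets
  have hSpd : ∀ t ∈ S, ∀ t' ∈ S, t ≠ t' →
      Disjoint ({(t.1, t.2.1), (t.2.1, t.2.2), (t.2.2, t.1)} : Finset (Fin m × Fin m))
        {(t'.1, t'.2.1), (t'.2.1, t'.2.2), (t'.2.2, t'.1)} := by
    intro t ht t' ht' hne
    rw [Finset.disjoint_left]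
    intro q hq hq'
    simp only [Finset.mem_insert, Finset.mem_singleton] at hq hq'
    obtain ⟨d1, d2, d3⟩ := hSdist t ht
    have hx : (q.1 = t.1 ∨ q.1 = t.2.1 ∨ q.1 = t.2.2) ∧
        (q.2 = t.1 ∨ q.2 = t.2.1 ∨ q.2 = t.2.2) ∧ q.1 ≠ q.2 := by
      rcases hq with rfl | rfl | rfl <;> simp <;> tauto
    have hx' : (q.1 = t'.1 ∨ q.1 = t'.2.1 ∨ q.1 = t'.2.2) ∧
        (q.2 = t'.1 ∨ q.2 = t'.2.1 ∨ q.2 = t'.2.2) := by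
      rcases hq' with rfl | rfl | rfl <;> simp
    exact hne (hSuniq t ht t' ht' q.1 q.2 hx.2.2 hx.1 hx.2.1 hx'.1 hx'.2)
  have hMpd : ∀ p ∈ M, ∀ p' ∈ M, p ≠ p' →
      Disjoint ({(d, p.1), (p.1, e), (e, p.2), (p.2, d)} : Finset (Fin m × Fin m))
        {(d, p'.1), (p'.1, e), (e, p'.2), (p'.2, d)} := by
    intro p hp p' hp' hne
    rw [Finset.disjoint_left]
    intro q hq hq'
    simp only [Finset.mem_insert, Finset.mem_singleton, Prod.ext_iff] at hq hq'
    obtain ⟨hpd, hp1, hp2⟩ := hMdist p hp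
    obtain ⟨hpd', hp1', hp2'⟩ := hMdist p' hp'
    rcases hq with ⟨e1, e2⟩ | ⟨e1, e2⟩ | ⟨e1, e2⟩ | ⟨e1, e2⟩ <;>
      rcases hq' with ⟨f1, f2⟩ | ⟨f1, f2⟩ | ⟨f1, f2⟩ | ⟨f1, f2⟩ <;>
      first
        | exact absurd (congrArg Fin.val (e1.symm.trans f1)) (by omega)
        | exact absurd (congrArg Fin.val (e2.symm.trans f2)) (by omega)
        | exact absurd (congrArg Fin.val (e1.trans f1.symm)) (by omega)
        | exact absurd (congrArg Fin.val (e2.trans f2.symm)) (by omega)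
        | exact absurd (congrArg Fin.val (e1.symm.trans f1.symm)) (by omega)
        | exact absurd (congrArg Fin.val (e2.symm.trans f2.symm)) (by omega)
        | exact absurd (congrArg Fin.val (e1.trans f1)) (by omega)
        | exact absurd (congrArg Fin.val (e2.trans f2)) (by omega)
        | exact hne (hMuniq p hp p' hp' q.1 (Or.inl e1) (Or.inl f1))
        | exact hne (hMuniq p hp p' hp' q.1 (Or.inl e1) (Or.inl f1.symm))
        | exact hne (hMuniq p hp p' hp' q.1 (Or.inl e1.symm) (Or.inl f1))
        | exact hne (hMuniq p hp p' hp' q.1 (Or.inl e1.symm) (Or.inl f1.symm))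
        | exact hne (hMuniq p hp p' hp' q.2 (Or.inl e2) (Or.inl f2))
        | exact hne (hMuniq p hp p' hp' q.2 (Or.inl e2) (Or.inl f2.symm))
        | exact hne (hMuniq p hp p' hp' q.2 (Or.inl e2.symm) (Or.inl f2))
        | exact hne (hMuniq p hp p' hp' q.2 (Or.inl e2.symm) (Or.inl f2.symm))
        | exact hne (hMuniq p hp p' hp' q.1 (Or.inr e1) (Or.inr f1))
        | exact hne (hMuniq p hp p' hp' q.1 (Or.inr e1) (Or.inr f1.symm))
        | exact hne (hMuniq p hp p' hp' q.1 (Or.inr e1.symm) (Or.inr f1))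
        | exact hne (hMuniq p hp p' hp' q.1 (Or.inr e1.symm) (Or.inr f1.symm))
        | exact hne (hMuniq p hp p' hp' q.2 (Or.inr e2) (Or.inr f2))
        | exact hne (hMuniq p hp p' hp' q.2 (Or.inr e2) (Or.inr f2.symm))
        | exact hne (hMuniq p hp p' hp' q.2 (Or.inr e2.symm) (Or.inr f2))
        | exact hne (hMuniq p hp p' hp' q.2 (Or.inr e2.symm) (Or.inr f2.symm))
  -- disjointness between the three parts
  have dj12 : Disjoint E1 E2 := by
    rw [Finset.disjoint_left]
    intro q hq hq'
    have := (hq1 q hq).2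
    have := (hq2 q hq').1
    omega
  have dj13 : Disjoint E1 E3 := by
    rw [Finset.disjoint_left]
    intro q hq hq'
    have := (hq1 q hq).2
    have := (hq3 q hq').1
    omega
  have dj23 : Disjoint E2 E3 := by
    rw [Finset.disjoint_left]
    intro q hq hq'
    have := (hq2 q hq).2
    have := (hq3 q hq').2
    omega
  -- splitting a sum over Ed
  have hsplit : ∀ f : Fin m × Fin m → ℤ, ∑ q ∈ Ed, f q =
      (∑ t ∈ S, (f (t.1, t.2.1) + f (t.2.1, t.2.2) + f (t.2.2, t.1))) +
      (f (c, d) + f (d, e) + f (e, c)) +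
      ∑ p ∈ M, (f (d, p.1) + f (p.1, e) + f (e, p.2) + f (p.2, d)) := by
    intro f
    rw [hEddef, Finset.sum_union (Finset.disjoint_union_left.mpr ⟨dj13, dj23⟩),
      Finset.sum_union dj12]
    congr 1
    · congr 1
      · rw [hE1def, Finset.sum_biUnion ?_]
        · refine Finset.sum_congr rfl (fun t ht => ?_)
          obtain ⟨d1, d2, d3⟩ := hSdist t ht
          rw [sum_trip (by simp [Prod.ext_iff]; tauto) (by simp [Prod.ext_iff]; tauto)
            (by simp [Prod.ext_iff]; tauto) f]
        · intro x hx y hy hxy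
          exact hSpd x (Finset.mem_coe.mp hx) y (Finset.mem_coe.mp hy) hxy
      · rw [hE2def, sum_trip (by simp [Prod.ext_iff]; tauto) (by simp [Prod.ext_iff]; tauto)
          (by simp [Prod.ext_iff]; tauto) f]
    · rw [hE3def, Finset.sum_biUnion ?_]
      · refine Finset.sum_congr rfl (fun p hp => ?_)
        obtain ⟨m1, m2, m3, m4⟩ := hMd p hp
        obtain ⟨hpd, hp1, hp2⟩ := hMdist p hp
        have mde : d ≠ e := hde
        have mdp2 : d ≠ p.2 := fne d p.2 (by omega)
        have mp1p2 : p.1 ≠ p.2 := hpd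
        have mp1d : p.1 ≠ d := fne p.1 d (by omega)
        have mee : e ≠ d := Ne.symm hde
        rw [sum_quad (by simp [Prod.ext_iff]; tauto) (by simp [Prod.ext_iff]; tauto)
          (by simp [Prod.ext_iff]; tauto) (by simp [Prod.ext_iff]; tauto)
          (by simp [Prod.ext_iff]; tauto) (by simp [Prod.ext_iff]; tauto) f]
      · intro x hx y hy hxy
        exact hMpd x (Finset.mem_coe.mp hx) y (Finset.mem_coe.mp hy) hxy
    -- no edge occurs together with its reversal
  have hrev : ∀ q ∈ Ed, (q.2, q.1) ∉ Ed := by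
    intro q hq hqr
    rw [hEddef, Finset.mem_union, Finset.mem_union] at hq hqr
    rcases hq with (hq | hq) | hq
    · obtain ⟨hb0, hb1, hb2⟩ := hq1 q hq
      rcases hqr with (hr | hr) | hr
      · obtain ⟨t, ht, hcase⟩ := (hmem1 q).mp hq
        obtain ⟨t', ht', hcase'⟩ := (hmem1 _).mp hr
        have hx : (q.1 = t.1 ∨ q.1 = t.2.1 ∨ q.1 = t.2.2) ∧
            (q.2 = t.1 ∨ q.2 = t.2.1 ∨ q.2 = t.2.2) := by
          rcases hcase with h | h | h <;> rw [Prod.ext_iff] at h <;> tauto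
        have hx' : (q.2 = t'.1 ∨ q.2 = t'.2.1 ∨ q.2 = t'.2.2) ∧
            (q.1 = t'.1 ∨ q.1 = t'.2.1 ∨ q.1 = t'.2.2) := by
          rcases hcase' with h | h | h <;> rw [Prod.ext_iff] at h <;>
            simp only [] at h <;> tauto
        obtain rfl := hSuniq t ht t' ht' q.1 q.2 hb0 hx.1 hx.2 hx'.2 hx'.1
        obtain ⟨d1, d2, d3⟩ := hSdist t ht
        rcases hcase with h | h | h <;> rcases hcase' with h' | h' | h' <;>
          rw [Prod.ext_iff] at h h' <;> obtain ⟨h1, h2⟩ := h <;> obtain ⟨h3, h4⟩ := h' <;>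
          simp only [] at h3 h4 <;>
          first
            | exact d1 (h1.symm.trans h4)
            | exact d1 (h4.symm.trans h1)
            | exact d1 (h2.symm.trans h3)
            | exact d1 (h3.symm.trans h2)
            | exact d2 (h1.symm.trans h4)
            | exact d2 (h4.symm.trans h1)
            | exact d2 (h2.symm.trans h3)
            | exact d2 (h3.symm.trans h2)
            | exact d3 (h1.symm.trans h4)
            | exact d3 (h4.symm.trans h1)
            | exact d3 (h2.symm.trans h3)
            | exact d3 (h3.symm.trans h2)
      · have := (hq2 _ hr).1
        simp only [] at this
        omega
      · have := (hq3 _ hr).1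
        simp only [] at this
        omega
    · obtain ⟨hone, hc1, hc2⟩ := hq2 q hq
      rcases hqr with (hr | hr) | hr
      · have := (hq1 _ hr).2
        simp only [] at this
        omega
      · simp only [hE2def, Finset.mem_insert, Finset.mem_singleton] at hq
        rcases hq with rfl | rfl | rfl <;>
          simp only [hE2def, Finset.mem_insert, Finset.mem_singleton, Prod.mk.injEq] at hr <;>
          rcases hr with ⟨x1, x2⟩ | ⟨x1, x2⟩ | ⟨x1, x2⟩ <;>
          first
            | exact absurd (congrArg Fin.val x1) (by omega)
            | exact absurd (congrArg Fin.val x2) (by omega)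
      · have := (hq3 _ hr).2
        simp only [] at this
        omega
    · obtain ⟨hone, hlow⟩ := hq3 q hq
      rcases hqr with (hr | hr) | hr
      · have := (hq1 _ hr).2
        simp only [] at this
        omega
      · have := (hq2 _ hr).2
        simp only [] at this
        omega
      · obtain ⟨p, hp, hcase⟩ := (hmem3 q).mp hq
        obtain ⟨p', hp', hcase'⟩ := (hmem3 _).mp hr
        obtain ⟨hpd, hp1, hp2⟩ := hMdist p hp
        obtain ⟨hpd', hp1', hp2'⟩ := hMdist p' hp'
        rcases hcase with rfl | rfl | rfl | rfl <;>
          simp only [Prod.mk.injEq] at hcase' <;>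
          rcases hcase' with ⟨x1, x2⟩ | ⟨x1, x2⟩ | ⟨x1, x2⟩ | ⟨x1, x2⟩ <;>
          first
            | exact absurd (congrArg Fin.val x1) (by omega)
            | exact absurd (congrArg Fin.val x2) (by omega)
            | exact hpd (x1.trans (congrArg Prod.snd (hMuniq p hp p' hp' p.1 (Or.inl rfl) (Or.inr x1)).symm))
            | exact hpd ((x1.trans (congrArg Prod.fst (hMuniq p hp p' hp' p.2 (Or.inr rfl) (Or.inl x1)).symm)).symm)
            | exact hpd (x1.symm.trans (congrArg Prod.snd (hMuniq p hp p' hp' p.1 (Or.inl rfl) (Or.inr x1.symm)).symm))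
            | exact hpd ((x1.symm.trans (congrArg Prod.fst (hMuniq p hp p' hp' p.2 (Or.inr rfl) (Or.inl x1.symm)).symm)).symm)
            | exact hpd (x2.trans (congrArg Prod.snd (hMuniq p hp p' hp' p.1 (Or.inl rfl) (Or.inr x2)).symm))
            | exact hpd ((x2.trans (congrArg Prod.fst (hMuniq p hp p' hp' p.2 (Or.inr rfl) (Or.inl x2)).symm)).symm)
            | exact hpd (x2.symm.trans (congrArg Prod.snd (hMuniq p hp p' hp' p.1 (Or.inl rfl) (Or.inr x2.symm)).symm))
            | exact hpd ((x2.symm.trans (congrArg Prod.fst (hMuniq p hp p' hp' p.2 (Or.inr rfl) (Or.inl x2.symm)).symm)).symm)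
  have hED2 : ∀ q ∈ Ed, ∀ q' ∈ Ed, ({q.1, q.2} : Finset (Fin m)) = {q'.1, q'.2} → q = q' := by
    intro q hq q' hq' hpair
    rcases pair_eq_pair_imp hpair with ⟨h1, h2⟩ | ⟨h1, h2⟩
    · exact Prod.ext_iff.mpr ⟨h1, h2⟩
    · exfalso
      apply hrev q' hq'
      have hqq : (q'.2, q'.1) = q := Prod.ext_iff.mpr ⟨h1.symm, h2.symm⟩
      rw [hqq]
      exact hq
  have hEdsum : ∀ B : Finset (Fin v),
      ((∑ t ∈ S, (edgeTrade v a b t.1 t.2.1 B + edgeTrade v a b t.2.1 t.2.2 B +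
        edgeTrade v a b t.2.2 t.1 B)) +
      (edgeTrade v a b c d B + edgeTrade v a b d e B + edgeTrade v a b e c B) +
      ∑ p ∈ M, (edgeTrade v a b d p.1 B + edgeTrade v a b p.1 e B +
        edgeTrade v a b e p.2 B + edgeTrade v a b p.2 d B)) =
      ∑ q ∈ Ed, edgeTrade v a b q.1 q.2 B :=
    fun B => (hsplit (fun q => edgeTrade v a b q.1 q.2 B)).symm
  have hbal : ∀ g : Fin m → ℤ, ∑ q ∈ Ed, (g q.1 - g q.2) = 0 := by
    intro g
    rw [hsplit (fun q => g q.1 - g q.2)]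
    rw [Finset.sum_eq_zero (fun (t : Fin m × Fin m × Fin m) _ => by ring),
      Finset.sum_eq_zero (fun (p : Fin m × Fin m) _ => by ring)]
    ring
  have hval1 : ∀ (B : Finset (Fin v)) (q : Fin m × Fin m), q.1 ≠ q.2 →
      (B = blkAB a b q.1 q.2 false ∨ B = blkAB a b q.1 q.2 true) →
      edgeTrade v a b q.1 q.2 B = 1 := by
    intro B q hne hcond
    rw [edgeTrade_eq_blk ha hb hne, if_pos hcond,
      if_neg (fun h => edgeTrade_pos_neg_excl ha hb hne hcond h)]
    ring
  have huniq : ∀ (B : Finset (Fin v)), ∀ q ∈ Ed, ∀ q' ∈ Ed,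
      edgeTrade v a b q.1 q.2 B ≠ 0 → edgeTrade v a b q'.1 q'.2 B ≠ 0 → q = q' := by
    intro B q hq q' hq' hne hne'
    have key : ∀ r, r ∈ Ed → edgeTrade v a b r.1 r.2 B ≠ 0 →
        ∃ x y s, ({x, y} : Finset (Fin m)) = {r.1, r.2} ∧ x ≠ y ∧ B = blkAB a b x y s := by
      intro r hr hrne
      have hrn := hEdne r hr
      rcases edgeTrade_ne_zero ha hb hrn hrne with (h | h) | (h | h)
      · exact ⟨r.1, r.2, false, rfl, hrn, h⟩
      · exact ⟨r.1, r.2, true, rfl, hrn, h⟩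
      · exact ⟨r.2, r.1, false, Finset.pair_comm r.2 r.1, Ne.symm hrn, h⟩
      · exact ⟨r.2, r.1, true, Finset.pair_comm r.2 r.1, Ne.symm hrn, h⟩
    obtain ⟨x, y, s, hxy, hne1, hB1⟩ := key q hq hne
    obtain ⟨x', y', s', hxy', hne2, hB2⟩ := key q' hq' hne'
    obtain ⟨hx, hy, -⟩ := blk_inj ha hb hne1 hne2 (hB1.symm.trans hB2)
    exact hED2 q hq q' hq' (hxy.symm.trans (by rw [hx, hy, hxy']))
  refine ⟨⟨?_, ?_⟩, ?_, ?_⟩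
  · -- zero off triples
    intro B hB
    simp only []
    rw [hEdsum B]
    exact Finset.sum_eq_zero (fun q hq => edgeTrade_card_ne ha hb (hEdne q hq) hB)
  · -- pair balance
    intro P hP
    calc ∑ B ∈ Finset.univ.filter (fun B : Finset (Fin v) => B.card = 3 ∧ P ⊆ B),
          ((∑ t ∈ S, (edgeTrade v a b t.1 t.2.1 B + edgeTrade v a b t.2.1 t.2.2 B +
            edgeTrade v a b t.2.2 t.1 B)) +
          (edgeTrade v a b c d B + edgeTrade v a b d e B + edgeTrade v a b e c B) +
          ∑ p ∈ M, (edgeTrade v a b d p.1 B + edgeTrade v a b p.1 e B +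
            edgeTrade v a b e p.2 B + edgeTrade v a b p.2 d B))
        = ∑ B ∈ Finset.univ.filter (fun B : Finset (Fin v) => B.card = 3 ∧ P ⊆ B),
            ∑ q ∈ Ed, edgeTrade v a b q.1 q.2 B :=
          Finset.sum_congr rfl (fun B _ => hEdsum B)
      _ = ∑ q ∈ Ed, ∑ B ∈ Finset.univ.filter (fun B : Finset (Fin v) => B.card = 3 ∧ P ⊆ B),
            edgeTrade v a b q.1 q.2 B := Finset.sum_comm
      _ = ∑ q ∈ Ed, ((2 : ℤ) * (if P = {a q.1, b q.1} then 1 else 0) -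
            2 * (if P = {a q.2, b q.2} then 1 else 0)) :=
          Finset.sum_congr rfl (fun q hq => edgeTrade_pairSum ha hb (hEdne q hq) hP)
      _ = 0 := hbal (fun k => (2 : ℤ) * (if P = {a k, b k} then 1 else 0))
  · -- simplicity
    intro B
    simp only []
    rw [hEdsum B]
    by_cases hex : ∃ q ∈ Ed, edgeTrade v a b q.1 q.2 B ≠ 0
    · obtain ⟨q0, hq0, hq0ne⟩ := hex
      rw [Finset.sum_eq_single_of_mem q0 hq0 (fun q hq hqne => by
        by_contra hc; exact hqne (huniq B q hq q0 hq0 hc hq0ne))]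
      exact edgeTrade_simple ha hb (hEdne q0 hq0) B
    · push_neg at hex
      rw [Finset.sum_eq_zero hex]
      norm_num
  · -- volume
    have hmax : ∀ B : Finset (Fin v), max (∑ q ∈ Ed, edgeTrade v a b q.1 q.2 B) 0 =
        ∑ q ∈ Ed, (if B = blkAB a b q.1 q.2 false ∨ B = blkAB a b q.1 q.2 true
          then (1 : ℤ) else 0) := by
      intro B
      by_cases hex : ∃ q ∈ Ed, edgeTrade v a b q.1 q.2 B ≠ 0
      · obtain ⟨q0, hq0, hq0ne⟩ := hex
        rw [Finset.sum_eq_single_of_mem q0 hq0 (fun q hq hqne => by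
          by_contra hc; exact hqne (huniq B q hq q0 hq0 hc hq0ne))]
        rw [Finset.sum_eq_single_of_mem q0 hq0 (fun q hq hqne => by
          refine if_neg (fun hcond => hqne (huniq B q hq q0 hq0 ?_ hq0ne))
          rw [hval1 B q (hEdne q hq) hcond]; norm_num)]
        exact edgeTrade_max ha hb (hEdne q0 hq0) B
      · push_neg at hex
        rw [Finset.sum_eq_zero hex, Finset.sum_eq_zero (fun q hq =>
          if_neg (fun hcond =>
            absurd ((hval1 B q (hEdne q hq) hcond).symm.trans (hex q hq)) one_ne_zero))]
        norm_num
    have hinner : ∀ q ∈ Ed, ∑ B : Finset (Fin v),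
        (if B = blkAB a b q.1 q.2 false ∨ B = blkAB a b q.1 q.2 true then (1 : ℤ) else 0)
        = 2 := by
      intro q hq
      have hne := hEdne q hq
      have hnb : ∀ B : Finset (Fin v),
          ¬(B = blkAB a b q.1 q.2 false ∧ B = blkAB a b q.1 q.2 true) := by
        rintro B ⟨u1, u2⟩
        exact absurd (blk_inj ha hb hne hne (u1.symm.trans u2)).2.2 (by simp)
      calc ∑ B : Finset (Fin v),
          (if B = blkAB a b q.1 q.2 false ∨ B = blkAB a b q.1 q.2 true then (1 : ℤ) else 0)
          = ∑ B : Finset (Fin v), ((if B = blkAB a b q.1 q.2 false then (1 : ℤ) else 0) +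
              (if B = blkAB a b q.1 q.2 true then 1 else 0)) :=
            Finset.sum_congr rfl (fun B _ => (ite_add_ite_or (hnb B)).symm)
        _ = 2 := by
            rw [Finset.sum_add_distrib, Finset.sum_ite_eq', Finset.sum_ite_eq']
            simp
    -- cardinalities
    have hE1card : E1.card = 3 * S.card := by
      rw [hE1def, Finset.card_biUnion hSpd]
      rw [Finset.sum_congr rfl (fun t ht => by
        obtain ⟨d1, d2, d3⟩ := hSdist t ht
        exact card_trip (by simp [Prod.ext_iff]; tauto) (by simp [Prod.ext_iff]; tauto)
          (by simp [Prod.ext_iff]; tauto))]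
      rw [Finset.sum_const, smul_eq_mul, Nat.mul_comm]
    have hE2card : E2.card = 3 := by
      rw [hE2def]
      exact card_trip (by simp [Prod.ext_iff]; tauto) (by simp [Prod.ext_iff]; tauto)
        (by simp [Prod.ext_iff]; tauto)
    have hE3card : E3.card = 4 * M.card := by
      rw [hE3def, Finset.card_biUnion hMpd]
      rw [Finset.sum_congr rfl (fun p hp => by
        obtain ⟨m1, m2, m3, m4⟩ := hMd p hp
        obtain ⟨hpd, hp1, hp2⟩ := hMdist p hp
        have n1 : d ≠ e := hde
        have n2 : d ≠ p.2 := fne d p.2 (by omega)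
        have n3 : p.1 ≠ p.2 := hpd
        have n4 : p.1 ≠ d := fne p.1 d (by omega)
        have n5 : e ≠ d := Ne.symm hde
        exact card_quad (by simp [Prod.ext_iff]; tauto) (by simp [Prod.ext_iff]; tauto)
          (by simp [Prod.ext_iff]; tauto) (by simp [Prod.ext_iff]; tauto)
          (by simp [Prod.ext_iff]; tauto) (by simp [Prod.ext_iff]; tauto))]
      rw [Finset.sum_const, smul_eq_mul, Nat.mul_comm]
    have hEdcard : Ed.card = 3 * S.card + 3 + 4 * M.card := by
      rw [hEddef, Finset.card_union_of_disjoint (Finset.disjoint_union_left.mpr ⟨dj13, dj23⟩),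
        Finset.card_union_of_disjoint dj12, hE1card, hE2card, hE3card]
    -- counting S via fibers
    set A : Finset (Fin m) := Finset.univ.filter (fun x : Fin m => (x : ℕ) < 2 * n - 1)
      with hAdef
    have hAcard : A.card = 2 * n - 1 := by
      have himg : A = Finset.image (Fin.castLE (show 2 * n - 1 ≤ m by omega)) Finset.univ := by
        ext x
        simp only [hAdef, Finset.mem_filter, Finset.mem_univ, true_and, Finset.mem_image]
        constructor
        · intro hx
          exact ⟨⟨(x : ℕ), hx⟩, by ext; simp [Fin.castLE]⟩
        · rintro ⟨y, -, rfl⟩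
          simpa using y.isLt
      rw [himg, Finset.card_image_of_injective _ (Fin.castLE_injective _), Finset.card_univ,
        Fintype.card_fin]
    obtain ⟨φ, hφ⟩ : ∃ φ : Fin m × Fin m → Fin m × Fin m × Fin m,
        ∀ q : Fin m × Fin m, ((q.1 : ℕ) < 2 * n - 1 ∧ (q.2 : ℕ) < 2 * n - 1 ∧ q.1 ≠ q.2) →
          (φ q ∈ S ∧ (q.1 = (φ q).1 ∨ q.1 = (φ q).2.1 ∨ q.1 = (φ q).2.2) ∧
            (q.2 = (φ q).1 ∨ q.2 = (φ q).2.1 ∨ q.2 = (φ q).2.2)) := by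
      refine ⟨fun q => if h : (q.1 : ℕ) < 2 * n - 1 ∧ (q.2 : ℕ) < 2 * n - 1 ∧ q.1 ≠ q.2 then
        (hSsts q.1 q.2 h.1 h.2.1 h.2.2).exists.choose else (q.1, q.1, q.1), fun q h => ?_⟩
      simp only [dif_pos h]
      exact (hSsts q.1 q.2 h.1 h.2.1 h.2.2).exists.choose_spec
    have hAoff : ∀ q ∈ A.offDiag, (q.1 : ℕ) < 2 * n - 1 ∧ (q.2 : ℕ) < 2 * n - 1 ∧ q.1 ≠ q.2 := by
      intro q hq
      rw [Finset.mem_offDiag] at hq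
      obtain ⟨h1, h2, h3⟩ := hq
      rw [hAdef, Finset.mem_filter] at h1 h2
      exact ⟨h1.2, h2.2, h3⟩
    have hcnt := Finset.card_eq_sum_card_fiberwise
      (fun q hq => ((hφ q (hAoff q hq)).1 : φ q ∈ S))
    have hfibcard : ∀ t ∈ S, (A.offDiag.filter (fun q => φ q = t)).card = 6 := by
      intro t ht
      obtain ⟨d1, d2, d3⟩ := hSdist t ht
      obtain ⟨s1, s2, s3⟩ := hSsub t ht
      have huniqφ : ∀ x y : Fin m, ∀ h1 : (x : ℕ) < 2 * n - 1, ∀ h2 : (y : ℕ) < 2 * n - 1,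
          ∀ h3 : x ≠ y, (x = t.1 ∨ x = t.2.1 ∨ x = t.2.2) →
          (y = t.1 ∨ y = t.2.1 ∨ y = t.2.2) → φ (x, y) = t := by
        intro x y h1 h2 h3 hx hy
        obtain ⟨hS', ha', hb'⟩ := hφ (x, y) ⟨h1, h2, h3⟩
        exact (hSsts x y h1 h2 h3).unique ⟨hS', ha', hb'⟩ ⟨ht, hx, hy⟩
      have hfib : A.offDiag.filter (fun q => φ q = t) =
          {(t.1, t.2.1), (t.2.1, t.1), (t.1, t.2.2), (t.2.2, t.1), (t.2.1, t.2.2),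
            (t.2.2, t.2.1)} := by
        ext q
        simp only [Finset.mem_filter, Finset.mem_offDiag, Finset.mem_insert,
          Finset.mem_singleton, hAdef, Finset.mem_filter, Finset.mem_univ, true_and]
        constructor
        · rintro ⟨⟨hq1A, hq2A, hqne⟩, hφq⟩
          obtain ⟨-, hx, hy⟩ := hφ q ⟨hq1A, hq2A, hqne⟩
          rw [hφq] at hx hy
          rcases hx with h1 | h1 | h1 <;> rcases hy with h2 | h2 | h2 <;>
            first
              | exact absurd (h1.trans h2.symm) hqne
              | simp [Prod.ext_iff, h1, h2]
        · rintro (rfl | rfl | rfl | rfl | rfl | rfl)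
          · exact ⟨⟨s1, s2, d1⟩, huniqφ _ _ s1 s2 d1 (Or.inl rfl) (Or.inr (Or.inl rfl))⟩
          · exact ⟨⟨s2, s1, Ne.symm d1⟩,
              huniqφ _ _ s2 s1 (Ne.symm d1) (Or.inr (Or.inl rfl)) (Or.inl rfl)⟩
          · exact ⟨⟨s1, s3, d2⟩, huniqφ _ _ s1 s3 d2 (Or.inl rfl) (Or.inr (Or.inr rfl))⟩
          · exact ⟨⟨s3, s1, Ne.symm d2⟩,
              huniqφ _ _ s3 s1 (Ne.symm d2) (Or.inr (Or.inr rfl)) (Or.inl rfl)⟩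
          · exact ⟨⟨s2, s3, d3⟩,
              huniqφ _ _ s2 s3 d3 (Or.inr (Or.inl rfl)) (Or.inr (Or.inr rfl))⟩
          · exact ⟨⟨s3, s2, Ne.symm d3⟩,
              huniqφ _ _ s3 s2 (Ne.symm d3) (Or.inr (Or.inr rfl)) (Or.inr (Or.inl rfl))⟩
      rw [hfib]
      rw [Finset.card_insert_of_notMem (by
          simp [Prod.ext_iff, d1, d2, d3, Ne.symm d1, Ne.symm d2, Ne.symm d3]),
        Finset.card_insert_of_notMem (by
          simp [Prod.ext_iff, d1, d2, d3, Ne.symm d1, Ne.symm d2, Ne.symm d3]),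
        Finset.card_insert_of_notMem (by
          simp [Prod.ext_iff, d1, d2, d3, Ne.symm d1, Ne.symm d2, Ne.symm d3]),
        Finset.card_insert_of_notMem (by
          simp [Prod.ext_iff, d1, d2, d3, Ne.symm d1, Ne.symm d2, Ne.symm d3]),
        Finset.card_insert_of_notMem (by
          simp [Prod.ext_iff, d1, d2, d3, Ne.symm d1, Ne.symm d2, Ne.symm d3]),
        Finset.card_singleton]
    have hS6 : 6 * S.card = (2 * n - 1) * (2 * n - 1) - (2 * n - 1) := by
      have h1 : A.offDiag.card = ∑ _t ∈ S, 6 := by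
        rw [hcnt]; exact Finset.sum_congr rfl hfibcard
      have h2 : A.offDiag.card = (2 * n - 1) * (2 * n - 1) - (2 * n - 1) := by
        rw [Finset.offDiag_card, hAcard]
      rw [← h2, h1, Finset.sum_const, smul_eq_mul, Nat.mul_comm]
    have hfinal : Ed.card * 2 = 2 * Nat.choose (2 * n + 1) 2 := by
      obtain ⟨k, rfl⟩ : ∃ k, n = k + 2 := ⟨n - 2, by omega⟩
      rw [hEdcard, hMcard, Nat.choose_two_right, Nat.add_sub_cancel]
      have e1 : (2 * (k + 2) + 1) * (2 * (k + 2)) = 2 * ((2 * k + 5) * (k + 2)) := by ring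
      rw [e1, Nat.mul_div_cancel_left _ (by norm_num : 0 < 2)]
      have e3 : 2 * (k + 2) - 1 = 2 * k + 3 := by omega
      rw [e3] at hS6
      have hS6' : 6 * S.card = (2 * k + 3) * (2 * k + 2) := by
        rw [hS6, show (2 * k + 3) * (2 * k + 3) = (2 * k + 3) * (2 * k + 2) + (2 * k + 3)
          from by ring, Nat.add_sub_cancel]
      have e2 : k + 2 - 1 = k + 1 := by omega
      rw [e2]
      have e4 : (3 * S.card + 3 + 4 * (k + 1)) * 2 = 6 * S.card + 6 + 8 * (k + 1) := by ring
      rw [e4, hS6']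
      ring
    -- put it together
    show volume v _ = _
    rw [volume]
    calc ∑ B : Finset (Fin v), max (((∑ t ∈ S, (edgeTrade v a b t.1 t.2.1 B +
            edgeTrade v a b t.2.1 t.2.2 B + edgeTrade v a b t.2.2 t.1 B)) +
          (edgeTrade v a b c d B + edgeTrade v a b d e B + edgeTrade v a b e c B) +
          ∑ p ∈ M, (edgeTrade v a b d p.1 B + edgeTrade v a b p.1 e B +
            edgeTrade v a b e p.2 B + edgeTrade v a b p.2 d B))) 0
        = ∑ B : Finset (Fin v), ∑ q ∈ Ed,
            (if B = blkAB a b q.1 q.2 false ∨ B = blkAB a b q.1 q.2 true then (1 : ℤ)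
              else 0) :=
          Finset.sum_congr rfl (fun B _ => by rw [hEdsum B]; exact hmax B)
      _ = ∑ q ∈ Ed, ∑ B : Finset (Fin v),
            (if B = blkAB a b q.1 q.2 false ∨ B = blkAB a b q.1 q.2 true then (1 : ℤ)
              else 0) := Finset.sum_comm
      _ = ∑ _q ∈ Ed, (2 : ℤ) := Finset.sum_congr rfl hinner
      _ = (Ed.card : ℤ) * 2 := by rw [Finset.sum_const, nsmul_eq_mul]
      _ = 2 * Nat.choose (2 * n + 1) 2 := by exact_mod_cast congrArg (Nat.cast (R := ℤ)) hfinal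
end Helpers
end
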